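/- arXiv:1407.1419 — 3 statements merged into one kernel-verified Lean document; each statement's English description precedes it below -/
import Mathlib

section
/- Let F ∈ L_1(S), let p ∈ ℤ and q ∈ ℕ be coprime, and let m ∈ ℕ. Then a point x ∈ S is a periodic (mod 1) point of F of period mq with rotation number ρ_F(x) = p/q if and only if x is a true periodic point of F^q − p of least period m. -/
open Set Filter Function

noncomputable section

/-- The real axis in `ℂ`. -/
def realAxis : Set ℂ := {z : ℂ | z.im = 0}

/-- The union of the branches of `S`. -/
def branches : Set ℂ := {z : ℂ | (∃ m : ℤ, z.re = (m : ℝ)) ∧ z.im ∈ Set.Icc (0 : ℝ) 1}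

/-- The universal covering `S = ℝ ∪ B` of the space `σ`. -/
def Sspace : Set ℂ := realAxis ∪ branches

/-- The branch `B_m`. -/
def branch (m : ℤ) : Set ℂ := {z : ℂ | z.re = (m : ℝ) ∧ z.im ∈ Set.Icc (0 : ℝ) 1}

/-- `F` is a continuous self-map of `S` of degree `d`, i.e. `F ∈ L_d(S)`. -/
def DegMap (d : ℤ) (F : ℂ → ℂ) : Prop :=
  Set.MapsTo F Sspace Sspace ∧ ContinuousOn F Sspace ∧
    ∀ z ∈ Sspace, F (z + 1) = F z + (d : ℂ)

/-- `z` is a periodic (mod 1) point of `F` of period `n`. -/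
def IsPeriodicMod1 (F : ℂ → ℂ) (z : ℂ) (n : ℕ) : Prop :=
  0 < n ∧ (∃ k : ℤ, F^[n] z = z + (k : ℂ)) ∧
    ∀ i : ℕ, 0 < i → i < n → ∀ k : ℤ, F^[i] z ≠ z + (k : ℂ)

/-- The set `Per(F)` of periods (mod 1) of `F`. -/
def PerSet (F : ℂ → ℂ) : Set ℕ := {n : ℕ | ∃ z ∈ Sspace, IsPeriodicMod1 F z n}

/-- `x` is a true periodic point of `G` of least period `n`. -/
def IsTruePeriodic (G : ℂ → ℂ) (x : ℂ) (n : ℕ) : Prop :=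
  0 < n ∧ G^[n] x = x ∧ ∀ i : ℕ, 0 < i → i < n → G^[i] x ≠ x

/-- The rotation number of `z` under `F` is `ρ`. -/
def HasRotNum (F : ℂ → ℂ) (z : ℂ) (ρ : ℝ) : Prop :=
  Filter.Tendsto (fun n : ℕ => ((F^[n] z).re - z.re) / (n : ℝ)) Filter.atTop (nhds ρ)

/-- `Rot_ℝ(F)`. -/
def RotR (F : ℂ → ℂ) : Set ℝ := {ρ : ℝ | ∃ x : ℝ, HasRotNum F (x : ℂ) ρ}

/-- `Rot(F)`. -/
def RotSet (F : ℂ → ℂ) : Set ℝ := {ρ : ℝ | ∃ z ∈ Sspace, HasRotNum F z ρ}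

/-- `Per(α, F)`: periods (mod 1) of points with rotation number `α`. -/
def PerRot (F : ℂ → ℂ) (α : ℝ) : Set ℕ :=
  {n : ℕ | ∃ z ∈ Sspace, IsPeriodicMod1 F z n ∧ HasRotNum F z α}

/-- The Sharkovsky ordering `a ≤_Sh b`. -/
def sharkLe (a b : ℕ) : Prop :=
  if ordCompl[2] a = 1 then
    (if ordCompl[2] b = 1 then a.factorization 2 ≤ b.factorization 2 else True)
  else
    ordCompl[2] b ≠ 1 ∧ (b.factorization 2 < a.factorization 2 ∨
      (b.factorization 2 = a.factorization 2 ∧ ordCompl[2] b ≤ ordCompl[2] a))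

/-- The initial segment `Shs(s)` of the Sharkovsky ordering. -/
def Shs (s : ℕ) : Set ℕ := {k : ℕ | 0 < k ∧ sharkLe k s}

/-- Initial segments of the Sharkovsky ordering: either `Shs(s)` for some `s ∈ ℕ`,
or the set of all powers of `2` (corresponding to the symbol `2^∞`). -/
def ShInitialSeg (E : Set ℕ) : Prop :=
  (∃ s : ℕ, 0 < s ∧ E = Shs s) ∨ E = {k : ℕ | ∃ i : ℕ, k = 2 ^ i}

/-- `M(c, d)`. -/
def Mset (c d : ℝ) : Set ℕ :=
  {n : ℕ | 0 < n ∧ ∃ k : ℤ, c < (k : ℝ) / (n : ℝ) ∧ (k : ℝ) / (n : ℝ) < d}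

/-- `Λ(ρ, E)`. -/
def Lam (ρ : ℝ) (E : Set ℕ) : Set ℕ :=
  {m : ℕ | ∃ k : ℤ, ∃ n : ℕ, 0 < n ∧ Int.gcd k (n : ℤ) = 1 ∧ ρ = (k : ℝ) / (n : ℝ) ∧
    ∃ q ∈ E, m = n * q}

/-- The lifted orbit of `z` under `F`. -/
def LOrb (F : ℂ → ℂ) (z : ℂ) : Set ℂ :=
  {w : ℂ | ∃ n : ℕ, ∃ k : ℤ, w = F^[n] z + (k : ℂ)}

/-- The convex hull of `A` in `S`: the smallest closed connected subset of `S`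
containing `A`. -/
def sHull (A : Set ℂ) : Set ℂ :=
  ⋂₀ {C : Set ℂ | A ⊆ C ∧ C ⊆ Sspace ∧ IsClosed C ∧ IsConnected C}

/-- Compact nondegenerate intervals of `S`. -/
def IsCNInterval (I : Set ℂ) : Prop :=
  ∃ a b : ℂ, a ∈ Sspace ∧ b ∈ Sspace ∧ a ≠ b ∧ I = sHull {a, b}

/-- `I` `G`-covers `J`: there is a subinterval `I' ⊆ I` with `G(I') = J`. -/
def Covers (G : ℂ → ℂ) (I J : Set ℂ) : Prop :=
  ∃ a b : ℂ, a ∈ I ∧ b ∈ I ∧ sHull {a, b} ⊆ I ∧ G '' sHull {a, b} = J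

/-- The interior of `K` relative to the subspace `S`. -/
def relInterior (K : Set ℂ) : Set ℂ := {z ∈ Sspace | K ∈ nhdsWithin z Sspace}

/-- The map `F_0 : S → B_0`, `F_0(z) = F(z) − Re(F(z))`. -/
def Fzero (F : ℂ → ℂ) (z : ℂ) : ℂ := F z - ((F z).re : ℂ)

/-- The set `A + ℤ` of integer translates of `A`. -/
def trZ (A : Set ℂ) : Set ℂ := {w : ℂ | ∃ z ∈ A, ∃ k : ℤ, w = z + (k : ℂ)}

/-- `(I, <_I)` positively `G`-covers `(J, <_J)`, where `I` is the oriented interval with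
endpoints `a = min I`, `b = max I`, and `J` the oriented interval with endpoints
`c = min J`, `d = max J`; the order along `I` is: `x ≤_I y` iff `x ∈ ⟨{a, y}⟩`. -/
def PosCovers (G : ℂ → ℂ) (a b c d : ℂ) : Prop :=
  ∃ x y : ℂ, x ∈ sHull {a, b} ∧ y ∈ sHull {a, b} ∧ x ∈ sHull {a, y} ∧ G x = c ∧ G y = d

/-- `(I, <_I)` negatively `G`-covers `(J, <_J)`. -/
def NegCovers (G : ℂ → ℂ) (a b c d : ℂ) : Prop := PosCovers G a b d c

/-- A concrete 3-star `X₃ ⊆ ℂ` with branching point `0`: the union of the three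
segments `[-1,0]`, `[0,1]` and `[0,i]`. -/
def star3 : Set ℂ :=
  {z : ℂ | z.im = 0 ∧ z.re ∈ Set.Icc (-1 : ℝ) 1} ∪
    {z : ℂ | z.re = 0 ∧ z.im ∈ Set.Icc (0 : ℝ) 1}

/-- `TPer(f)`: the set of least periods of the periodic points of `f` in `X`. -/
def TPer (f : ℂ → ℂ) (X : Set ℂ) : Set ℕ :=
  {n : ℕ | ∃ x ∈ X, IsTruePeriodic f x n}

open Classical in
/-- The taxicab distance on `S`. -/
def sDist (x y : ℂ) : ℝ :=
  if (∃ m : ℤ, x.re = (m : ℝ) ∧ y.re = (m : ℝ)) ∧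
      x.im ∈ Set.Icc (0 : ℝ) 1 ∧ y.im ∈ Set.Icc (0 : ℝ) 1 then
    |x.im - y.im|
  else |x.im| + |x.re - y.re| + |y.im|

lemma Sspace_add_int {z : ℂ} (hz : z ∈ Sspace) (k : ℤ) : z + (k : ℂ) ∈ Sspace := by
  rcases hz with h | ⟨⟨n, hn⟩, him⟩
  · left
    simp_all [realAxis]
  · right
    refine ⟨⟨n + k, ?_⟩, ?_⟩ <;> simp_all [branches]

lemma degmap_add_int {F : ℂ → ℂ} (hF : DegMap 1 F) {z : ℂ} (hz : z ∈ Sspace) (k : ℤ) :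
    F (z + (k : ℂ)) = F z + (k : ℂ) := by
  induction k using Int.induction_on with
  | zero => simp
  | succ i ih =>
      have h1 := hF.2.2 (z + (i : ℤ)) (Sspace_add_int hz i)
      push_cast at h1 ih ⊢
      rw [show z + ((i : ℂ) + 1) = z + (i : ℂ) + 1 by ring, h1, ih]
      ring
  | pred i ih =>
      have hw : z + (-(i : ℤ) - 1 : ℂ) ∈ Sspace := by
        have := Sspace_add_int hz (-(i : ℤ) - 1)
        push_cast at this ⊢
        convert this using 2
      have h1 := hF.2.2 _ hw
      push_cast at h1 ih ⊢
      rw [show z + (-(i:ℂ) - 1) + 1 = z + -(i:ℂ) by ring] at h1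
      rw [show z + (-(i:ℂ) - 1) = z + (-(i:ℂ)-1) by ring]
      have := h1.symm
      rw [ih] at this
      linear_combination this

lemma degmap_iter_mem {F : ℂ → ℂ} (hF : DegMap 1 F) {z : ℂ} (hz : z ∈ Sspace) (n : ℕ) :
    F^[n] z ∈ Sspace := Set.MapsTo.iterate hF.1 n hz

lemma degmap_iter_add_int {F : ℂ → ℂ} (hF : DegMap 1 F) {z : ℂ} (hz : z ∈ Sspace) (k : ℤ)
    (n : ℕ) : F^[n] (z + (k : ℂ)) = F^[n] z + (k : ℂ) := by
  induction n with
  | zero => simp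
  | succ n ih =>
      rw [Function.iterate_succ_apply', ih, Function.iterate_succ_apply',
        degmap_add_int hF (degmap_iter_mem hF hz n) k]

lemma degmap_iter_per {F : ℂ → ℂ} (hF : DegMap 1 F) {x : ℂ} (hx : x ∈ Sspace) {N : ℕ}
    {c : ℤ} (h : F^[N] x = x + (c : ℂ)) (t : ℕ) :
    F^[N * t] x = x + ((t : ℤ) * c : ℤ) := by
  induction t with
  | zero => simp
  | succ t ih =>
      have : N * (t + 1) = N * t + N := by ring
      rw [this, Function.iterate_add_apply, h, degmap_iter_add_int hF hx c (N*t), ih]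
      push_cast
      ring

lemma degmap_G_iter {F : ℂ → ℂ} (hF : DegMap 1 F) {x : ℂ} (hx : x ∈ Sspace) (p : ℤ)
    (q : ℕ) (i : ℕ) :
    (fun w => F^[q] w - (p : ℂ))^[i] x = F^[i * q] x + ((-(i : ℤ) * p : ℤ) : ℂ) := by
  induction i with
  | zero => simp
  | succ i ih =>
      rw [Function.iterate_succ_apply', ih]
      have h1 : F^[q] (F^[i*q] x + ((-(i : ℤ) * p : ℤ) : ℂ))
          = F^[q] (F^[i*q] x) + ((-(i : ℤ) * p : ℤ) : ℂ) :=
        degmap_iter_add_int hF (degmap_iter_mem hF hx (i*q)) _ q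
      simp only [h1]
      rw [show (i+1) * q = q + i * q by ring, Function.iterate_add_apply]
      push_cast
      ring

lemma rot_extract (F : ℂ → ℂ) (hF : DegMap 1 F) (p : ℤ) (q : ℕ) (hq : 0 < q)
    (m : ℕ) (x : ℂ) (hx : x ∈ Sspace)
    (hmq : 0 < m * q) (k : ℤ) (hk : F^[m*q] x = x + (k : ℂ))
    (hrot : Filter.Tendsto (fun n : ℕ => ((F^[n] x).re - x.re) / (n : ℝ)) Filter.atTop
      (nhds ((p : ℝ) / (q : ℝ)))) : k = (m : ℤ) * p := by
  have hm : 0 < m := by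
    rcases Nat.eq_zero_or_pos m with h | h
    · subst h; simp at hmq
    · exact h
  have hq0 : (q : ℝ) ≠ 0 := by positivity
  have hmq0 : ((m : ℝ) * q) ≠ 0 := by positivity
  have hper := degmap_iter_per hF hx hk
  have hmono : Tendsto (fun n : ℕ => (m * q) * n) atTop atTop := by
    apply tendsto_atTop_mono (fun n => Nat.le_mul_of_pos_left n hmq) tendsto_id
  have hsub := hrot.comp hmono
  have heq : (fun n : ℕ => ((F^[(m*q)*n] x).re - x.re) / (((m*q)*n : ℕ) : ℝ))
      =ᶠ[atTop] fun _ => (k : ℝ) / ((m : ℝ) * q) := by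
    filter_upwards [eventually_ge_atTop 1] with n hn
    have hn0 : (n : ℝ) ≠ 0 := by
      have : 0 < n := hn
      positivity
    rw [hper n]
    simp only [Complex.add_re, Complex.intCast_re]
    push_cast
    field_simp
    ring
  have hlim : (k : ℝ) / ((m : ℝ) * q) = (p : ℝ) / q := by
    have h1 : Tendsto (fun _ : ℕ => (k : ℝ) / ((m : ℝ) * q)) atTop (nhds ((p:ℝ)/q)) := by
      refine Tendsto.congr' heq ?_
      exact hsub
    exact tendsto_nhds_unique tendsto_const_nhds h1
  have h2 : (k : ℝ) = (m : ℝ) * p := by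
    field_simp at hlim
    have : (k : ℝ) * q = ((m:ℝ) * p) * q := by rw [hlim]
    exact mul_right_cancel₀ hq0 this
  exact_mod_cast h2

lemma rot_of_per (F : ℂ → ℂ) (hF : DegMap 1 F) (p : ℤ) (q : ℕ) (hq : 0 < q)
    (m : ℕ) (hm : 0 < m) (x : ℂ) (hx : x ∈ Sspace)
    (hFmq : F^[m*q] x = x + (((m : ℤ) * p : ℤ) : ℂ)) :
    Filter.Tendsto (fun n : ℕ => ((F^[n] x).re - x.re) / (n : ℝ)) Filter.atTop
      (nhds ((p : ℝ) / (q : ℝ))) := by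
  have hq0 : (q : ℝ) ≠ 0 := by positivity
  have hmq : 0 < m * q := Nat.mul_pos hm hq
  set ρ : ℝ := (p : ℝ) / q with hρ
  set e : ℕ → ℝ := fun n => (F^[n] x).re - x.re - n * ρ with he
  have hper : ∀ n, e n = e (n % (m*q)) := by
    intro n
    set r := n % (m*q) with hr
    set t := n / (m*q) with ht
    conv_lhs => rw [show n = r + (m*q) * t from (Nat.mod_add_div n (m*q)).symm]
    have h1 : F^[r + (m*q) * t] x
        = F^[r] x + (((t : ℤ) * ((m : ℤ) * p)) : ℤ) := by
      rw [Function.iterate_add_apply, degmap_iter_per hF hx hFmq t,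
        degmap_iter_add_int hF hx _ _]
    simp only [he, h1, Complex.add_re, Complex.intCast_re]
    clear_value r t
    push_cast
    rw [hρ]
    field_simp
    ring
  obtain ⟨D, hD⟩ : ∃ D, ∀ n, |e n| ≤ D := by
    have hne : (Finset.range (m*q)).Nonempty := Finset.nonempty_range_iff.mpr (by omega)
    refine ⟨(Finset.range (m*q)).sup' hne (fun r => |e r|), fun n => ?_⟩
    rw [hper n]
    exact Finset.le_sup' (fun r => |e r|) (Finset.mem_range.mpr (Nat.mod_lt n hmq))
  rw [show (nhds ρ) = nhds (0 + ρ) by rw [zero_add]]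
  have key : Tendsto (fun n : ℕ => ((F^[n] x).re - x.re) / (n : ℝ) - ρ) atTop (nhds 0) := by
    apply squeeze_zero_norm' (a := fun n : ℕ => D / (n : ℝ))
    · filter_upwards [eventually_ge_atTop 1] with n hn
      have hn0 : (n : ℝ) ≠ 0 := by
        have : 0 < n := hn
        positivity
      have hval : ((F^[n] x).re - x.re) / (n : ℝ) - ρ = e n / n := by
        field_simp [he]
        rfl
      rw [Real.norm_eq_abs, hval, abs_div, abs_of_nonneg (by positivity : (0:ℝ) ≤ (n:ℝ))]
      gcongr
      exact hD n
    · exact tendsto_const_div_atTop_nhds_zero_nat D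
  have := key.add (tendsto_const_nhds (x := ρ) (f := atTop))
  simpa using this

/-- For `F ∈ L₁(S)`, `p, q` coprime and `m ∈ ℕ`: `x` is a periodic (mod 1)
point of `F` of period `mq` with rotation number `p/q` iff `x` is a true periodic point
of `F^q − p` of least period `m`. -/
theorem statement8 (F : ℂ → ℂ) (hF : DegMap 1 F) (p : ℤ) (q : ℕ) (hq : 0 < q)
    (hpq : Int.gcd p (q : ℤ) = 1) (m : ℕ) (x : ℂ) (hx : x ∈ Sspace) :
    (IsPeriodicMod1 F x (m * q) ∧ HasRotNum F x ((p : ℝ) / (q : ℝ))) ↔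
      IsTruePeriodic (fun w => F^[q] w - (p : ℂ)) x m := by
  constructor
  · rintro ⟨⟨hmq, ⟨k, hk⟩, hmin⟩, hrot⟩
    have hm : 0 < m := by
      rcases Nat.eq_zero_or_pos m with h | h
      · subst h; simp at hmq
      · exact h
    have hkv : k = (m : ℤ) * p := rot_extract F hF p q hq m x hx hmq k hk hrot
    refine ⟨hm, ?_, ?_⟩
    · rw [degmap_G_iter hF hx p q m, hk, hkv]
      push_cast
      ring
    · intro i hi0 him hGi
      rw [degmap_G_iter hF hx p q i] at hGi
      have hFi : F^[i * q] x = x + (((i : ℤ) * p : ℤ) : ℂ) := by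
        push_cast at hGi ⊢
        linear_combination hGi
      exact hmin (i * q) (Nat.mul_pos hi0 hq) ((Nat.mul_lt_mul_right hq).mpr him)
        ((i : ℤ) * p) hFi
  · rintro ⟨hm, hGm, hGmin⟩
    have hq0 : (q : ℤ) ≠ 0 := by positivity
    have hFmq : F^[m * q] x = x + (((m : ℤ) * p : ℤ) : ℂ) := by
      rw [degmap_G_iter hF hx p q m] at hGm
      push_cast at hGm ⊢
      linear_combination hGm
    have hmin : ∀ i : ℕ, 0 < i → i < m * q → ∀ k : ℤ, F^[i] x ≠ x + (k : ℂ) := by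
      intro j hj0 hjm k hkj
      have h1 := degmap_iter_per hF hx hkj (m * q)
      have h2 := degmap_iter_per hF hx hFmq j
      rw [mul_comm j (m*q)] at h1
      rw [h1] at h2
      have hZ : ((m * q : ℕ) : ℤ) * k = (j : ℤ) * ((m : ℤ) * p) := by
        have := add_left_cancel h2
        exact_mod_cast this
      push_cast at hZ
      have hZ' : (q : ℤ) * k = (j : ℤ) * p := by
        have hm0 : (m : ℤ) ≠ 0 := by positivity
        have h4 : (m : ℤ) * ((q : ℤ) * k) = (m : ℤ) * ((j : ℤ) * p) := by
          ring_nf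
          ring_nf at hZ
          linarith [hZ]
        exact mul_left_cancel₀ hm0 h4
      have hdvd : q ∣ j := by
        have h3 : (q : ℤ) ∣ (j : ℤ) * p := ⟨k, hZ'.symm⟩
        have hcop : IsCoprime (q : ℤ) p :=
          Int.isCoprime_iff_gcd_eq_one.mpr (by rwa [Int.gcd_comm])
        exact_mod_cast hcop.dvd_of_dvd_mul_right h3
      obtain ⟨s, hs⟩ := hdvd
      have hs0 : 0 < s := by
        rcases Nat.eq_zero_or_pos s with h | h
        · subst h; omega
        · exact h
      have hsm : s < m := by
        by_contra h
        push_neg at h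
        have : m * q ≤ j := by
          calc m * q ≤ s * q := Nat.mul_le_mul_right q h
          _ = j := by rw [hs, mul_comm]
        omega
      have hkval : k = (s : ℤ) * p := by
        have h5 : (q : ℤ) * k = (q : ℤ) * ((s : ℤ) * p) := by
          rw [hZ']
          have : (j : ℤ) = (q : ℤ) * s := by exact_mod_cast hs
          rw [this]
          ring
        exact mul_left_cancel₀ hq0 h5
      apply hGmin s hs0 hsm
      rw [degmap_G_iter hF hx p q s]
      have hj : F^[s * q] x = x + (k : ℂ) := by
        rw [show s * q = j by rw [hs, mul_comm]]
        exact hkj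
      rw [hj, hkval]
      push_cast
      ring
    exact ⟨⟨Nat.mul_pos hm hq, ⟨(m : ℤ) * p, hFmq⟩, hmin⟩,
      rot_of_per F hF p q hq m hm x hx hFmq⟩


end
end

section
/- Let I_0, I_1, …, I_n be compact nondegenerate intervals of S with I_n = I_0 and, for each 0 ≤ i ≤ n−1, let F_i : I_i → S be a continuous map such that I_i F_i-covers I_{i+1}. Then there exist points x_i ∈ I_i for 0 ≤ i ≤ n such that F_i(x_i) = x_{i+1} for all 0 ≤ i ≤ n−1 and x_n = x_0. -/
open Set Filter Function

noncomputable section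

-- basic S facts
lemma S_im_nonneg {z : ℂ} (hz : z ∈ Sspace) : 0 ≤ z.im := by
  rcases hz with h | h
  · simp [realAxis] at h; simp [h]
  · exact h.2.1

lemma S_im_le_one {z : ℂ} (hz : z ∈ Sspace) : z.im ≤ 1 := by
  rcases hz with h | h
  · simp [realAxis] at h; simp [h]
  · exact h.2.2

lemma S_int_of_im_pos {z : ℂ} (hz : z ∈ Sspace) (h : 0 < z.im) : ∃ m : ℤ, z.re = (m : ℝ) := by
  rcases hz with h' | h'
  · simp [realAxis] at h'; simp [h'] at h
  · exact h'.1

-- segments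
def vseg (m a b : ℝ) : Set ℂ := {z | z.re = m ∧ z.im ∈ Icc a b}
def hseg (a b : ℝ) : Set ℂ := {z | z.im = 0 ∧ z.re ∈ Icc a b}

lemma isClosed_vseg (m a b : ℝ) : IsClosed (vseg m a b) := by
  have : vseg m a b = Complex.re ⁻¹' {m} ∩ Complex.im ⁻¹' Icc a b := by
    ext z; simp [vseg]
  rw [this]
  exact (isClosed_singleton.preimage Complex.continuous_re).inter
    (isClosed_Icc.preimage Complex.continuous_im)

lemma isClosed_hseg (a b : ℝ) : IsClosed (hseg a b) := by
  have : hseg a b = Complex.im ⁻¹' {0} ∩ Complex.re ⁻¹' Icc a b := by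
    ext z; simp [hseg]
  rw [this]
  exact (isClosed_singleton.preimage Complex.continuous_im).inter
    (isClosed_Icc.preimage Complex.continuous_re)

lemma vseg_eq_image (m a b : ℝ) : vseg m a b = (fun t : ℝ => (⟨m, t⟩ : ℂ)) '' Icc a b := by
  ext z
  constructor
  · rintro ⟨h1, h2⟩; exact ⟨z.im, h2, by apply Complex.ext <;> simp [h1]⟩
  · rintro ⟨t, ht, rfl⟩; exact ⟨rfl, ht⟩

lemma hseg_eq_image (a b : ℝ) : hseg a b = (fun t : ℝ => (⟨t, 0⟩ : ℂ)) '' Icc a b := by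
  ext z
  constructor
  · rintro ⟨h1, h2⟩; exact ⟨z.re, h2, by apply Complex.ext <;> simp [h1]⟩
  · rintro ⟨t, ht, rfl⟩; exact ⟨rfl, ht⟩

lemma continuous_mkv (m : ℝ) : Continuous (fun t : ℝ => (⟨m, t⟩ : ℂ)) := by
  have : (fun t : ℝ => (⟨m, t⟩ : ℂ)) = fun t : ℝ => (m : ℂ) + t * Complex.I := by
    funext t; apply Complex.ext <;> simp
  rw [this]; continuity

lemma continuous_mkh : Continuous (fun t : ℝ => (⟨t, 0⟩ : ℂ)) := by
  have : (fun t : ℝ => (⟨t, 0⟩ : ℂ)) = fun t : ℝ => (t : ℂ) := by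
    funext t; apply Complex.ext <;> simp
  rw [this]; continuity

lemma isPreconnected_vseg (m a b : ℝ) : IsPreconnected (vseg m a b) := by
  rw [vseg_eq_image]
  exact (isPreconnected_Icc).image _ (continuous_mkv m).continuousOn

lemma isPreconnected_hseg (a b : ℝ) : IsPreconnected (hseg a b) := by
  rw [hseg_eq_image]
  exact (isPreconnected_Icc).image _ continuous_mkh.continuousOn

-- the arc
def arcS (x y : ℂ) : Set ℂ :=
  if x.re = y.re then vseg x.re (min x.im y.im) (max x.im y.im)
  else hseg (min x.re y.re) (max x.re y.re) ∪ vseg x.re 0 x.im ∪ vseg y.re 0 y.im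

lemma mem_S_of_below {z w : ℂ} (hw : w ∈ Sspace) (hre : z.re = w.re)
    (h0 : 0 ≤ z.im) (h1 : z.im ≤ w.im) : z ∈ Sspace := by
  rcases eq_or_lt_of_le h0 with he | hpos
  · left; exact he.symm
  · right
    obtain ⟨m, hm⟩ := S_int_of_im_pos hw (lt_of_lt_of_le hpos h1)
    exact ⟨⟨m, hre.trans hm⟩, h0, h1.trans (S_im_le_one hw)⟩

lemma left_mem_arcS {x y : ℂ} (hx : 0 ≤ x.im) (hy : 0 ≤ y.im) : x ∈ arcS x y := by
  unfold arcS
  split_ifs with h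
  · exact ⟨rfl, min_le_left _ _, le_max_left _ _⟩
  · left; right; exact ⟨rfl, hx, le_refl _⟩

lemma right_mem_arcS {x y : ℂ} (hx : 0 ≤ x.im) (hy : 0 ≤ y.im) : y ∈ arcS x y := by
  unfold arcS
  split_ifs with h
  · exact ⟨h.symm, min_le_right _ _, le_max_right _ _⟩
  · right; exact ⟨rfl, hy, le_refl _⟩

lemma arcS_subset_S {x y : ℂ} (hx : x ∈ Sspace) (hy : y ∈ Sspace) : arcS x y ⊆ Sspace := by
  intro z hz
  unfold arcS at hz
  split_ifs at hz with h
  · rcases hz with ⟨h1, h2, h3⟩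
    have h0 : 0 ≤ z.im := le_trans (le_min (S_im_nonneg hx) (S_im_nonneg hy)) h2
    rcases max_cases x.im y.im with ⟨he, _⟩ | ⟨he, _⟩
    · exact mem_S_of_below hx h1 h0 (he ▸ h3)
    · exact mem_S_of_below hy (h1.trans h) h0 (he ▸ h3)
  · rcases hz with (⟨h1, _⟩ | ⟨h1, h2, h3⟩) | ⟨h1, h2, h3⟩
    · left; exact h1
    · exact mem_S_of_below hx h1 h2 h3
    · exact mem_S_of_below hy h1 h2 h3

lemma isClosed_arcS (x y : ℂ) : IsClosed (arcS x y) := by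
  unfold arcS
  split_ifs with h
  · exact isClosed_vseg _ _ _
  · exact ((isClosed_hseg _ _).union (isClosed_vseg _ _ _)).union (isClosed_vseg _ _ _)

lemma isConnected_arcS {x y : ℂ} (hx : 0 ≤ x.im) (hy : 0 ≤ y.im) : IsConnected (arcS x y) := by
  refine ⟨⟨x, left_mem_arcS hx hy⟩, ?_⟩
  unfold arcS
  split_ifs with h
  · exact isPreconnected_vseg _ _ _
  · have hxb : (⟨x.re, 0⟩ : ℂ) ∈ hseg (min x.re y.re) (max x.re y.re) :=
      ⟨rfl, min_le_left _ _, le_max_left _ _⟩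
    have hxv : (⟨x.re, 0⟩ : ℂ) ∈ vseg x.re 0 x.im := ⟨rfl, le_refl _, hx⟩
    have hyb : (⟨y.re, 0⟩ : ℂ) ∈ hseg (min x.re y.re) (max x.re y.re) :=
      ⟨rfl, min_le_right _ _, le_max_right _ _⟩
    have hyv : (⟨y.re, 0⟩ : ℂ) ∈ vseg y.re 0 y.im := ⟨rfl, le_refl _, hy⟩
    refine IsPreconnected.union (⟨y.re, 0⟩ : ℂ) (Or.inl hyb) hyv ?_ (isPreconnected_vseg _ _ _)
    exact IsPreconnected.union (⟨x.re, 0⟩ : ℂ) hxb hxv (isPreconnected_hseg _ _)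
      (isPreconnected_vseg _ _ _)

-- separation machinery
lemma sep_aux {C U V : Set ℂ} (hC : IsPreconnected C) (hCS : C ⊆ Sspace) {p : ℂ} (hp : p ∉ C)
    (hU : IsOpen U) (hV : IsOpen V) (hcov : ∀ z ∈ Sspace, z ≠ p → z ∈ U ∪ V)
    (hdisj : ∀ z ∈ Sspace, z ∈ U → z ∈ V → False)
    {u v : ℂ} (hu : u ∈ C) (hv : v ∈ C) (huU : u ∈ U) (hvV : v ∈ V) : False := by
  obtain ⟨z, hzC, hzU, hzV⟩ := hC U V hU hV
    (fun z hz => hcov z (hCS hz) (by rintro rfl; exact hp hz)) ⟨u, hu, huU⟩ ⟨v, hv, hvV⟩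
  exact hdisj z (hCS hzC) hzU hzV

lemma sep_horiz_nonint {C : Set ℂ} (hC : IsPreconnected C) (hCS : C ⊆ Sspace) {r : ℝ}
    (hr : ∀ m : ℤ, r ≠ (m : ℝ)) (hp : (⟨r, 0⟩ : ℂ) ∉ C)
    {u v : ℂ} (hu : u ∈ C) (hv : v ∈ C) (hur : u.re < r) (hvr : r < v.re) : False := by
  refine sep_aux hC hCS hp (U := {z : ℂ | z.re < r}) (V := {z : ℂ | r < z.re})
    (isOpen_lt Complex.continuous_re continuous_const)
    (isOpen_lt continuous_const Complex.continuous_re) ?_ ?_ hu hv hur hvr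
  · intro z hz hne
    rcases lt_trichotomy z.re r with h | h | h
    · exact Or.inl h
    · exfalso
      rcases hz with hz | hz
      · exact hne (by apply Complex.ext <;> simp [h, hz.out])
      · obtain ⟨m, hm⟩ := hz.1
        exact hr m (h.symm.trans hm)
    · exact Or.inr h
  · intro z _ h1 h2
    have h1' : z.re < r := h1
    have h2' : r < z.re := h2
    linarith

lemma sep_horiz_int {C : Set ℂ} (hC : IsPreconnected C) (hCS : C ⊆ Sspace) {m : ℤ}
    (hp : (⟨(m : ℝ), 0⟩ : ℂ) ∉ C)
    {u v : ℂ} (hu : u ∈ C) (hv : v ∈ C) (hur : u.re < m) (hvr : (m : ℝ) < v.re) : False := by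
  refine sep_aux hC hCS hp (U := {z : ℂ | z.re < m})
    (V := {z : ℂ | (m : ℝ) < z.re} ∪ {z : ℂ | (m : ℝ) - 1/2 < z.re ∧ 0 < z.im})
    (isOpen_lt Complex.continuous_re continuous_const)
    ((isOpen_lt continuous_const Complex.continuous_re).union
      ((isOpen_lt continuous_const Complex.continuous_re).inter
        (isOpen_lt continuous_const Complex.continuous_im))) ?_ ?_ hu hv hur (Or.inl hvr)
  · intro z hz hne
    rcases lt_trichotomy z.re (m : ℝ) with h | h | h
    · exact Or.inl h
    · rcases eq_or_lt_of_le (S_im_nonneg hz) with h0 | h0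
      · exact absurd (by apply Complex.ext <;> simp [h, h0.symm]) hne
      · exact Or.inr (Or.inr ⟨by rw [h]; linarith, h0⟩)
    · exact Or.inr (Or.inl h)
  · intro z hz h1 h2
    rcases h2 with h2 | h2
    · have h1' : z.re < (m : ℝ) := h1
      have h2' : (m : ℝ) < z.re := h2
      linarith
    · obtain ⟨k, hk⟩ := S_int_of_im_pos hz h2.2
      have h3 : (k : ℝ) < m := hk ▸ h1
      have h4 : (m : ℝ) - 1/2 < k := hk ▸ h2.1
      have hkm : k < m := by exact_mod_cast h3
      have hkm2 : k + 1 ≤ m := hkm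
      have : (k : ℝ) + 1 ≤ (m : ℝ) := by exact_mod_cast hkm2
      linarith

lemma sep_vert {C : Set ℂ} (hC : IsPreconnected C) (hCS : C ⊆ Sspace) {m : ℤ} {s : ℝ}
    (hs : 0 ≤ s) (hp : (⟨(m : ℝ), s⟩ : ℂ) ∉ C)
    {u v : ℂ} (hu : u ∈ C) (hv : v ∈ C) (hu1 : u.re = (m : ℝ)) (hu2 : s < u.im)
    (hv1 : v.re ≠ (m : ℝ) ∨ v.im < s) : False := by
  refine sep_aux hC hCS hp
    (U := {z : ℂ | s < z.im ∧ (m : ℝ) - 1/2 < z.re ∧ z.re < (m : ℝ) + 1/2})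
    (V := {z : ℂ | z.re ≠ (m : ℝ)} ∪ {z : ℂ | z.im < s})
    (((isOpen_lt continuous_const Complex.continuous_im)).inter
      ((isOpen_lt continuous_const Complex.continuous_re).inter
        (isOpen_lt Complex.continuous_re continuous_const)))
    ((isOpen_ne_fun Complex.continuous_re continuous_const).union
      (isOpen_lt Complex.continuous_im continuous_const)) ?_ ?_ hu hv
    ⟨hu2, by rw [hu1]; constructor <;> linarith⟩
    (by rcases hv1 with h | h; exacts [Or.inl h, Or.inr h])
  · intro z hz hne
    by_cases h : z.re = (m : ℝ)
    · rcases lt_trichotomy z.im s with h1 | h1 | h1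
      · exact Or.inr (Or.inr h1)
      · exact absurd (by apply Complex.ext <;> simp [h, h1]) hne
      · exact Or.inl ⟨h1, by rw [h]; constructor <;> linarith⟩
    · exact Or.inr (Or.inl h)
  · intro z hz h1 h2
    rcases h2 with h2 | h2
    · obtain ⟨k, hk⟩ := S_int_of_im_pos hz (lt_of_le_of_lt hs h1.1)
      have h3 : (m : ℝ) - 1/2 < (k : ℝ) := hk ▸ h1.2.1
      have h4 : (k : ℝ) < (m : ℝ) + 1/2 := hk ▸ h1.2.2
      have : k = m := by
        have a1 : (m : ℝ) - 1 < k := by linarith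
        have a2 : (k : ℝ) < m + 1 := by linarith
        have b1 : m - 1 < k := by exact_mod_cast a1
        have b2 : k < m + 1 := by exact_mod_cast a2
        omega
      exact h2 (hk.trans (by rw [this]))
    · have h2' : z.im < s := h2
      exact lt_asymm h1.1 h2'

-- minimality of the arc
lemma col_case {C : Set ℂ} (hCp : IsPreconnected C) (hCS : C ⊆ Sspace) {x y z : ℂ}
    (hx : x ∈ Sspace) (hxC : x ∈ C) (hyC : y ∈ C) (hzC : z ∉ C)
    (hre : z.re = x.re) (h0 : 0 ≤ z.im) (h1 : z.im ≤ x.im) (hne : z ≠ x)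
    (hyre : y.re ≠ x.re) : False := by
  have him : z.im < x.im := by
    rcases eq_or_lt_of_le h1 with h | h
    · exact absurd (Complex.ext hre h) hne
    · exact h
  obtain ⟨k, hk⟩ := S_int_of_im_pos hx (lt_of_le_of_lt h0 him)
  refine sep_vert hCp hCS (m := k) (s := z.im) h0 ?_ hxC hyC hk him
    (Or.inl (by rw [← hk]; exact hyre))
  have : (⟨(k : ℝ), z.im⟩ : ℂ) = z := Complex.ext (by rw [hre, hk]) rfl
  rw [this]; exact hzC

lemma arcS_subset_connected {x y : ℂ} (hx : x ∈ Sspace) (hy : y ∈ Sspace) {C : Set ℂ}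
    (hxC : x ∈ C) (hyC : y ∈ C) (hCS : C ⊆ Sspace) (hCp : IsPreconnected C) :
    arcS x y ⊆ C := by
  intro z hz
  by_contra hzC
  by_cases hzx : z = x
  · exact hzC (hzx ▸ hxC)
  by_cases hzy : z = y
  · exact hzC (hzy ▸ hyC)
  unfold arcS at hz
  split_ifs at hz with h
  · -- same re
    obtain ⟨h1, h2, h3⟩ := hz
    have h0 : 0 ≤ z.im := le_trans (le_min (S_im_nonneg hx) (S_im_nonneg hy)) h2
    have hix : z.im ≠ x.im := fun he => hzx (Complex.ext h1 he)
    have hiy : z.im ≠ y.im := fun he => hzy (Complex.ext (h1.trans h) he)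
    rcases le_total x.im y.im with hle | hle
    · have h2' : x.im ≤ z.im := (min_eq_left hle) ▸ h2
      have h3' : z.im ≤ y.im := (max_eq_right hle) ▸ h3
      have hlt1 : x.im < z.im := lt_of_le_of_ne h2' (Ne.symm hix)
      have hlt2 : z.im < y.im := lt_of_le_of_ne h3' hiy
      obtain ⟨k, hk⟩ := S_int_of_im_pos hy (lt_of_le_of_lt h0 hlt2)
      refine sep_vert hCp hCS (m := k) (s := z.im) h0 ?_ hyC hxC hk hlt2 (Or.inr hlt1)
      have : (⟨(k : ℝ), z.im⟩ : ℂ) = z := Complex.ext (by rw [h1, h, hk]) rfl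
      rw [this]; exact hzC
    · have h2' : y.im ≤ z.im := (min_eq_right hle) ▸ h2
      have h3' : z.im ≤ x.im := (max_eq_left hle) ▸ h3
      have hlt1 : y.im < z.im := lt_of_le_of_ne h2' (Ne.symm hiy)
      have hlt2 : z.im < x.im := lt_of_le_of_ne h3' hix
      obtain ⟨k, hk⟩ := S_int_of_im_pos hx (lt_of_le_of_lt h0 hlt2)
      refine sep_vert hCp hCS (m := k) (s := z.im) h0 ?_ hxC hyC hk hlt2 (Or.inr hlt1)
      have : (⟨(k : ℝ), z.im⟩ : ℂ) = z := Complex.ext (by rw [h1, hk]) rfl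
      rw [this]; exact hzC
  · -- different re
    rcases hz with (⟨h1, h2, h3⟩ | ⟨h1, h2, h3⟩) | ⟨h1, h2, h3⟩
    · -- horizontal part
      by_cases hrx : z.re = x.re
      · exact col_case hCp hCS hx hxC hyC hzC hrx (le_of_eq h1.symm)
          (h1 ▸ S_im_nonneg hx) hzx (Ne.symm h)
      by_cases hry : z.re = y.re
      · exact col_case hCp hCS hy hyC hxC hzC hry (le_of_eq h1.symm)
          (h1 ▸ S_im_nonneg hy) hzy h
      have hpz : ∀ w : ℝ, w = z.re → (⟨w, 0⟩ : ℂ) = z := fun w hw => Complex.ext hw h1.symm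
      rcases lt_or_gt_of_ne h with hxy | hxy
      · have hm : x.re < z.re := lt_of_le_of_ne ((min_eq_left hxy.le) ▸ h2) (Ne.symm hrx)
        have hM : z.re < y.re := lt_of_le_of_ne ((max_eq_right hxy.le) ▸ h3) hry
        by_cases hint : ∃ k : ℤ, z.re = (k : ℝ)
        · obtain ⟨k, hk⟩ := hint
          exact sep_horiz_int hCp hCS (m := k) (by rw [hpz _ hk.symm]; exact hzC)
            hxC hyC (hk ▸ hm) (hk ▸ hM)
        · exact sep_horiz_nonint hCp hCS (r := z.re)
            (fun m hm' => hint ⟨m, hm'⟩) (by rw [hpz _ rfl]; exact hzC) hxC hyC hm hM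
      · have hm : y.re < z.re := lt_of_le_of_ne ((min_eq_right hxy.le) ▸ h2) (Ne.symm hry)
        have hM : z.re < x.re := lt_of_le_of_ne ((max_eq_left hxy.le) ▸ h3) hrx
        by_cases hint : ∃ k : ℤ, z.re = (k : ℝ)
        · obtain ⟨k, hk⟩ := hint
          exact sep_horiz_int hCp hCS (m := k) (by rw [hpz _ hk.symm]; exact hzC)
            hyC hxC (hk ▸ hm) (hk ▸ hM)
        · exact sep_horiz_nonint hCp hCS (r := z.re)
            (fun m hm' => hint ⟨m, hm'⟩) (by rw [hpz _ rfl]; exact hzC) hyC hxC hm hM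
    · exact col_case hCp hCS hx hxC hyC hzC h1 h2 h3 hzx (Ne.symm h)
    · exact col_case hCp hCS hy hyC hxC hzC h1 h2 h3 hzy h

lemma sHull_pair {x y : ℂ} (hx : x ∈ Sspace) (hy : y ∈ Sspace) :
    sHull {x, y} = arcS x y := by
  apply le_antisymm
  · apply sInter_subset_of_mem
    refine ⟨?_, arcS_subset_S hx hy, isClosed_arcS x y, isConnected_arcS (S_im_nonneg hx) (S_im_nonneg hy)⟩
    rintro w (rfl | rfl)
    · exact left_mem_arcS (S_im_nonneg hx) (S_im_nonneg hy)
    · exact right_mem_arcS (S_im_nonneg hx) (S_im_nonneg hy)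
  · apply subset_sInter
    rintro C ⟨hpair, hCS, _, hCc⟩
    exact arcS_subset_connected hx hy (hpair (by simp)) (hpair (by simp)) hCS hCc.isPreconnected

-- coordinates and parametrization
def coordA (x y : ℂ) (z : ℂ) : ℝ :=
  if x.re = y.re then z.im
  else z.re + z.im * (2 * z.re - x.re - y.re) / (max x.re y.re - min x.re y.re)

def gammaA (x y : ℂ) (t : ℝ) : ℂ :=
  if x.re = y.re then ⟨x.re, t⟩
  else ⟨min (max x.re y.re) (max (min x.re y.re) t),
        max 0 (min x.re y.re - t) + max 0 (t - max x.re y.re)⟩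

lemma continuous_coordA (x y : ℂ) : Continuous (coordA x y) := by
  unfold coordA
  split_ifs with h
  · exact Complex.continuous_im
  · apply Complex.continuous_re.add
    exact (Complex.continuous_im.mul
      (((continuous_const.mul Complex.continuous_re).sub continuous_const).sub
        continuous_const)).div_const _

lemma continuous_gammaA (x y : ℂ) : Continuous (gammaA x y) := by
  have key : ∀ f g : ℝ → ℝ, Continuous f → Continuous g →
      Continuous (fun t => (⟨f t, g t⟩ : ℂ)) := by
    intro f g hf hg
    have : (fun t => (⟨f t, g t⟩ : ℂ)) = fun t => (f t : ℂ) + (g t : ℂ) * Complex.I := by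
      funext t; apply Complex.ext <;> simp
    rw [this]
    exact (Complex.continuous_ofReal.comp hf).add
      ((Complex.continuous_ofReal.comp hg).mul continuous_const)
  unfold gammaA
  split_ifs with h
  · exact key _ _ continuous_const continuous_id
  · exact key _ _ (continuous_const.min (continuous_const.max continuous_id))
      ((continuous_const.max (continuous_const.sub continuous_id)).add
        (continuous_const.max (continuous_id.sub continuous_const)))

lemma coordA_gammaA (x y : ℂ) (t : ℝ) : coordA x y (gammaA x y t) = t := by
  unfold coordA gammaA
  split_ifs with h
  · rfl
  · set m := min x.re y.re with hm
    set M := max x.re y.re with hM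
    have hmM : m < M := min_lt_max.mpr h
    have hD : M - m ≠ 0 := by linarith
    have hsum : x.re + y.re = m + M := (min_add_max _ _).symm
    show (min M (max m t) : ℝ) + (max 0 (m - t) + max 0 (t - M)) *
      (2 * min M (max m t) - x.re - y.re) / (M - m) = t
    rcases le_total t m with h1 | h1
    · rw [max_eq_left h1, min_eq_right hmM.le,
        max_eq_right (by linarith : (0:ℝ) ≤ m - t), max_eq_left (by linarith : t - M ≤ 0)]
      rw [show 2 * m - x.re - y.re = m - M by linarith]
      field_simp
      ring
    · rcases le_total t M with h2 | h2
      · rw [max_eq_right h1, min_eq_right h2,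
          max_eq_left (by linarith : m - t ≤ 0), max_eq_left (by linarith : t - M ≤ 0)]
        simp
      · rw [max_eq_right h1, min_eq_left h2,
          max_eq_left (by linarith : m - t ≤ 0), max_eq_right (by linarith : (0:ℝ) ≤ t - M)]
        rw [show 2 * M - x.re - y.re = M - m by linarith]
        field_simp
        ring

lemma arcS_comm (x y : ℂ) : arcS x y = arcS y x := by
  unfold arcS
  by_cases h : x.re = y.re
  · rw [if_pos h, if_pos h.symm, h, min_comm, max_comm]
  · rw [if_neg h, if_neg (Ne.symm h), min_comm x.re, max_comm x.re, union_right_comm]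

lemma gammaA_comm (x y : ℂ) : gammaA x y = gammaA y x := by
  funext t
  unfold gammaA
  by_cases h : x.re = y.re
  · rw [if_pos h, if_pos h.symm, h]
  · rw [if_neg h, if_neg (Ne.symm h), min_comm x.re, max_comm x.re]

lemma coordA_comm (x y : ℂ) : coordA x y = coordA y x := by
  funext z
  unfold coordA
  by_cases h : x.re = y.re
  · rw [if_pos h, if_pos h.symm]
  · rw [if_neg h, if_neg (Ne.symm h), min_comm x.re, max_comm x.re]
    ring_nf

lemma arc_eq_image_aux {x y : ℂ} (hxS : x ∈ Sspace) (hyS : y ∈ Sspace)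
    (hlt : x.re < y.re) :
    arcS x y = gammaA x y '' Icc (x.re - x.im) (y.re + y.im) := by
  have hne : x.re ≠ y.re := ne_of_lt hlt
  have hx0 : 0 ≤ x.im := S_im_nonneg hxS
  have hy0 : 0 ≤ y.im := S_im_nonneg hyS
  have hmin : min x.re y.re = x.re := min_eq_left hlt.le
  have hmax : max x.re y.re = y.re := max_eq_right hlt.le
  have hgam : ∀ t : ℝ, gammaA x y t =
      ⟨min y.re (max x.re t), max 0 (x.re - t) + max 0 (t - y.re)⟩ := by
    intro t; unfold gammaA; rw [if_neg hne, hmin, hmax]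
  have himsub : gammaA x y '' Icc (x.re - x.im) (y.re + y.im) ⊆ arcS x y := by
    rintro w ⟨t, ⟨ht1, ht2⟩, rfl⟩
    rw [hgam t]
    unfold arcS
    rw [if_neg hne, hmin, hmax]
    rcases le_total t x.re with h1 | h1
    · left; right
      rw [max_eq_left h1, min_eq_right hlt.le, max_eq_right (by linarith : (0:ℝ) ≤ x.re - t),
        max_eq_left (by linarith : t - y.re ≤ 0)]
      refine ⟨rfl, ?_, ?_⟩
      · show (0:ℝ) ≤ x.re - t + 0; linarith
      · show x.re - t + 0 ≤ x.im; linarith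
    · rcases le_total t y.re with h2 | h2
      · left; left
        rw [max_eq_right h1, min_eq_right h2, max_eq_left (by linarith : x.re - t ≤ 0),
          max_eq_left (by linarith : t - y.re ≤ 0)]
        refine ⟨?_, ?_, ?_⟩
        · show (0:ℝ) + 0 = 0; ring
        · show x.re ≤ t; linarith
        · show t ≤ y.re; linarith
      · right
        rw [max_eq_right h1, min_eq_left h2, max_eq_left (by linarith : x.re - t ≤ 0),
          max_eq_right (by linarith : (0:ℝ) ≤ t - y.re)]
        refine ⟨rfl, ?_, ?_⟩
        · show (0:ℝ) ≤ 0 + (t - y.re); linarith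
        · show 0 + (t - y.re) ≤ y.im; linarith
  have hgx : gammaA x y (x.re - x.im) = x := by
    rw [hgam]
    apply Complex.ext
    · show min y.re (max x.re (x.re - x.im)) = x.re
      rw [max_eq_left (by linarith), min_eq_right hlt.le]
    · show max 0 (x.re - (x.re - x.im)) + max 0 (x.re - x.im - y.re) = x.im
      rw [max_eq_right (by linarith : (0:ℝ) ≤ x.re - (x.re - x.im)),
        max_eq_left (by linarith : x.re - x.im - y.re ≤ 0)]
      ring
  have hgy : gammaA x y (y.re + y.im) = y := by
    rw [hgam]
    apply Complex.ext
    · show min y.re (max x.re (y.re + y.im)) = y.re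
      rw [max_eq_right (by linarith), min_eq_left (by linarith)]
    · show max 0 (x.re - (y.re + y.im)) + max 0 (y.re + y.im - y.re) = y.im
      rw [max_eq_left (by linarith : x.re - (y.re + y.im) ≤ 0),
        max_eq_right (by linarith : (0:ℝ) ≤ y.re + y.im - y.re)]
      ring
  apply le_antisymm
  · apply arcS_subset_connected hxS hyS
    · exact ⟨x.re - x.im, ⟨le_refl _, by linarith⟩, hgx⟩
    · exact ⟨y.re + y.im, ⟨by linarith, le_refl _⟩, hgy⟩
    · exact himsub.trans (arcS_subset_S hxS hyS)
    · exact (isPreconnected_Icc).image _ (continuous_gammaA x y).continuousOn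
  · exact himsub

lemma coordA_left {x y : ℂ} (hlt : x.re < y.re) : coordA x y x = x.re - x.im := by
  unfold coordA
  rw [if_neg (ne_of_lt hlt), min_eq_left hlt.le, max_eq_right hlt.le]
  have : y.re - x.re ≠ 0 := by linarith
  field_simp
  ring

lemma coordA_right {x y : ℂ} (hlt : x.re < y.re) : coordA x y y = y.re + y.im := by
  unfold coordA
  rw [if_neg (ne_of_lt hlt), min_eq_left hlt.le, max_eq_right hlt.le]
  have : y.re - x.re ≠ 0 := by linarith
  field_simp
  ring

lemma arc_eq_image {x y : ℂ} (hxS : x ∈ Sspace) (hyS : y ∈ Sspace) :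
    arcS x y = gammaA x y ''
      Icc (min (coordA x y x) (coordA x y y)) (max (coordA x y x) (coordA x y y)) := by
  by_cases h : x.re = y.re
  · have hcx : coordA x y x = x.im := by unfold coordA; rw [if_pos h]
    have hcy : coordA x y y = y.im := by unfold coordA; rw [if_pos h]
    have hg : ∀ t, gammaA x y t = (⟨x.re, t⟩ : ℂ) := fun t => by unfold gammaA; rw [if_pos h]
    unfold arcS
    rw [if_pos h, hcx, hcy, vseg_eq_image]
    have hfun : gammaA x y = fun t : ℝ => (⟨x.re, t⟩ : ℂ) := funext hg
    rw [hfun]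
  · rcases lt_or_gt_of_ne h with hlt | hlt
    · have h1 : coordA x y x ≤ coordA x y y := by
        rw [coordA_left hlt, coordA_right hlt]
        have := S_im_nonneg hxS; have := S_im_nonneg hyS
        linarith
      rw [min_eq_left h1, max_eq_right h1, coordA_left hlt, coordA_right hlt]
      exact arc_eq_image_aux hxS hyS hlt
    · have h1 : coordA x y y ≤ coordA x y x := by
        rw [coordA_comm, coordA_left hlt, coordA_right hlt]
        have := S_im_nonneg hxS; have := S_im_nonneg hyS
        linarith
      rw [min_eq_right h1, max_eq_left h1, arcS_comm, gammaA_comm, coordA_comm,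
        coordA_left hlt, coordA_right hlt]
      exact arc_eq_image_aux hyS hxS hlt

-- derived arc lemmas
lemma gamma_coord_mem {x y z : ℂ} (hxS : x ∈ Sspace) (hyS : y ∈ Sspace)
    (hz : z ∈ arcS x y) : gammaA x y (coordA x y z) = z := by
  rw [arc_eq_image hxS hyS] at hz
  obtain ⟨t, _, rfl⟩ := hz
  rw [coordA_gammaA]

lemma coord_mem_Icc {x y z : ℂ} (hxS : x ∈ Sspace) (hyS : y ∈ Sspace)
    (hz : z ∈ arcS x y) : coordA x y z ∈
      Icc (min (coordA x y x) (coordA x y y)) (max (coordA x y x) (coordA x y y)) := by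
  rw [arc_eq_image hxS hyS] at hz
  obtain ⟨t, ht, rfl⟩ := hz
  rwa [coordA_gammaA]

lemma coord_image_arc {x y : ℂ} (hxS : x ∈ Sspace) (hyS : y ∈ Sspace) :
    coordA x y '' arcS x y =
      Icc (min (coordA x y x) (coordA x y y)) (max (coordA x y x) (coordA x y y)) := by
  rw [arc_eq_image hxS hyS, ← image_comp]
  have : (coordA x y ∘ gammaA x y) = id := by
    funext t; exact coordA_gammaA x y t
  rw [this, image_id]

lemma arc_sub_arc {x y u v : ℂ} (hxS : x ∈ Sspace) (hyS : y ∈ Sspace)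
    (hu : u ∈ arcS x y) (hv : v ∈ arcS x y) : arcS u v ⊆ arcS x y :=
  arcS_subset_connected (arcS_subset_S hxS hyS hu) (arcS_subset_S hxS hyS hv) hu hv
    (arcS_subset_S hxS hyS)
    (isConnected_arcS (S_im_nonneg hxS) (S_im_nonneg hyS)).isPreconnected

lemma subarc_eq_image {x y u v : ℂ} (hxS : x ∈ Sspace) (hyS : y ∈ Sspace)
    (hu : u ∈ arcS x y) (hv : v ∈ arcS x y) :
    arcS u v = gammaA x y ''
      Icc (min (coordA x y u) (coordA x y v)) (max (coordA x y u) (coordA x y v)) := by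
  have huS : u ∈ Sspace := arcS_subset_S hxS hyS hu
  have hvS : v ∈ Sspace := arcS_subset_S hxS hyS hv
  have hIccsub : Icc (min (coordA x y u) (coordA x y v)) (max (coordA x y u) (coordA x y v)) ⊆
      Icc (min (coordA x y x) (coordA x y y)) (max (coordA x y x) (coordA x y y)) := by
    apply Icc_subset_Icc
    · exact le_min (coord_mem_Icc hxS hyS hu).1 (coord_mem_Icc hxS hyS hv).1
    · exact max_le (coord_mem_Icc hxS hyS hu).2 (coord_mem_Icc hxS hyS hv).2
  apply le_antisymm
  · apply arcS_subset_connected huS hvS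
    · exact ⟨coordA x y u, ⟨min_le_left _ _, le_max_left _ _⟩, gamma_coord_mem hxS hyS hu⟩
    · exact ⟨coordA x y v, ⟨min_le_right _ _, le_max_right _ _⟩, gamma_coord_mem hxS hyS hv⟩
    · intro w hw
      apply arcS_subset_S hxS hyS
      rw [arc_eq_image hxS hyS]
      exact image_mono hIccsub hw
    · exact (isPreconnected_Icc).image _ (continuous_gammaA x y).continuousOn
  · rintro w ⟨t, ht, rfl⟩
    have himg : Icc (min (coordA x y u) (coordA x y v)) (max (coordA x y u) (coordA x y v)) ⊆
        coordA x y '' arcS u v := by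
      apply IsPreconnected.Icc_subset
      · exact ((isConnected_arcS (S_im_nonneg huS) (S_im_nonneg hvS)).isPreconnected).image _
          (continuous_coordA x y).continuousOn
      · rcases min_cases (coordA x y u) (coordA x y v) with ⟨he, _⟩ | ⟨he, _⟩
        · rw [he]; exact ⟨u, left_mem_arcS (S_im_nonneg huS) (S_im_nonneg hvS), rfl⟩
        · rw [he]; exact ⟨v, right_mem_arcS (S_im_nonneg huS) (S_im_nonneg hvS), rfl⟩
      · rcases max_cases (coordA x y u) (coordA x y v) with ⟨he, _⟩ | ⟨he, _⟩
        · rw [he]; exact ⟨u, left_mem_arcS (S_im_nonneg huS) (S_im_nonneg hvS), rfl⟩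
        · rw [he]; exact ⟨v, right_mem_arcS (S_im_nonneg huS) (S_im_nonneg hvS), rfl⟩
    obtain ⟨w', hw', hcw'⟩ := himg ht
    have : gammaA x y t = w' := by
      rw [← hcw', gamma_coord_mem hxS hyS (arc_sub_arc hxS hyS hu hv hw')]
    rw [this]; exact hw'

lemma coord_image_subarc {x y u v : ℂ} (hxS : x ∈ Sspace) (hyS : y ∈ Sspace)
    (hu : u ∈ arcS x y) (hv : v ∈ arcS x y) :
    coordA x y '' arcS u v =
      Icc (min (coordA x y u) (coordA x y v)) (max (coordA x y u) (coordA x y v)) := by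
  rw [subarc_eq_image hxS hyS hu hv, ← image_comp]
  have : (coordA x y ∘ gammaA x y) = id := by
    funext t; exact coordA_gammaA x y t
  rw [this, image_id]

-- real interval covering lemmas
lemma real_cover_aux {g : ℝ → ℝ} {α β c d p q : ℝ} (hg : ContinuousOn g (Icc α β))
    (hp : p ∈ Icc α β) (hq : q ∈ Icc α β) (hpq : p ≤ q)
    (hgp : g p = c) (hgq : g q = d) (hcd : c ≤ d) :
    ∃ s t, s ∈ Icc α β ∧ t ∈ Icc α β ∧ s ≤ t ∧ g '' Icc s t = Icc c d := by
  have hsubpq : Icc p q ⊆ Icc α β := Icc_subset_Icc hp.1 hq.2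
  have hE : IsClosed {x ∈ Icc p q | g x = d} := by
    have := (hg.mono hsubpq)
    exact this.preimage_isClosed_of_isClosed isClosed_Icc isClosed_singleton
  have hEne : {x ∈ Icc p q | g x = d}.Nonempty := ⟨q, ⟨hpq, le_refl q⟩, hgq⟩
  have hEbdd : BddBelow {x ∈ Icc p q | g x = d} := ⟨p, fun x hx => hx.1.1⟩
  set t0 := sInf {x ∈ Icc p q | g x = d} with ht0
  have ht0mem : t0 ∈ {x ∈ Icc p q | g x = d} := hE.csInf_mem hEne hEbdd
  have hsubpt : Icc p t0 ⊆ Icc α β := Icc_subset_Icc hp.1 (le_trans ht0mem.1.2 hq.2)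
  have hF : IsClosed {x ∈ Icc p t0 | g x = c} := by
    exact (hg.mono hsubpt).preimage_isClosed_of_isClosed isClosed_Icc isClosed_singleton
  have hFne : {x ∈ Icc p t0 | g x = c}.Nonempty := ⟨p, ⟨le_refl p, ht0mem.1.1⟩, hgp⟩
  have hFbdd : BddAbove {x ∈ Icc p t0 | g x = c} := ⟨t0, fun x hx => hx.1.2⟩
  set s0 := sSup {x ∈ Icc p t0 | g x = c} with hs0
  have hs0mem : s0 ∈ {x ∈ Icc p t0 | g x = c} := hF.csSup_mem hFne hFbdd
  have hs0t0 : s0 ≤ t0 := hs0mem.1.2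
  have hsubst : Icc s0 t0 ⊆ Icc α β := Icc_subset_Icc (le_trans hp.1 hs0mem.1.1)
    (le_trans ht0mem.1.2 hq.2)
  refine ⟨s0, t0, hsubst ⟨le_refl _, hs0t0⟩, hsubst ⟨hs0t0, le_refl _⟩, hs0t0, ?_⟩
  apply le_antisymm
  · rintro y ⟨x, hx, rfl⟩
    constructor
    · by_contra hlt
      push_neg at hlt
      have : c ∈ Icc (g x) (g t0) := ⟨hlt.le, ht0mem.2 ▸ hcd⟩
      obtain ⟨y', hy', hgy'⟩ := intermediate_value_Icc hx.2
        (hg.mono (Icc_subset_Icc (hsubst ⟨hx.1, hx.2⟩).1 (hsubst ⟨hs0t0, le_refl _⟩).2)) this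
      have hy'F : y' ∈ {x ∈ Icc p t0 | g x = c} :=
        ⟨⟨le_trans hs0mem.1.1 (le_trans hx.1 hy'.1), hy'.2⟩, hgy'⟩
      have : y' ≤ s0 := le_csSup hFbdd hy'F
      have hxy : x = y' := le_antisymm hy'.1 (le_trans this hx.1)
      rw [← hxy] at hgy'
      exact (ne_of_lt hlt) hgy'
    · by_contra hlt
      push_neg at hlt
      have : d ∈ Icc (g s0) (g x) := ⟨hs0mem.2 ▸ hcd, hlt.le⟩
      obtain ⟨y', hy', hgy'⟩ := intermediate_value_Icc hx.1
        (hg.mono (Icc_subset_Icc (hsubst ⟨le_refl _, hs0t0⟩).1 (hsubst hx).2)) this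
      have hy'E : y' ∈ {x ∈ Icc p q | g x = d} :=
        ⟨⟨le_trans hs0mem.1.1 hy'.1, le_trans hy'.2 (le_trans hx.2 ht0mem.1.2)⟩, hgy'⟩
      have ht0y' : t0 ≤ y' := csInf_le hEbdd hy'E
      have hxy : x = y' := le_antisymm (le_trans hx.2 ht0y') hy'.2
      rw [← hxy] at hgy'
      exact (ne_of_gt hlt) hgy'
  · have := intermediate_value_Icc hs0t0 (hg.mono hsubst)
    rw [hs0mem.2, ht0mem.2] at this
    exact this

lemma real_cover {g : ℝ → ℝ} {α β c d : ℝ} (hg : ContinuousOn g (Icc α β))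
    (hcd : c ≤ d) (hsub : Icc c d ⊆ g '' Icc α β) :
    ∃ s t, s ∈ Icc α β ∧ t ∈ Icc α β ∧ s ≤ t ∧ g '' Icc s t = Icc c d := by
  obtain ⟨p, hp, hgp⟩ := hsub ⟨le_refl c, hcd⟩
  obtain ⟨q, hq, hgq⟩ := hsub ⟨hcd, le_refl d⟩
  rcases le_total p q with hpq | hpq
  · exact real_cover_aux hg hp hq hpq hgp hgq hcd
  · have hg' : ContinuousOn (fun x => c + d - g x) (Icc α β) :=
      (continuousOn_const.sub hg)
    obtain ⟨s, t, hs, ht, hst, him⟩ := real_cover_aux hg' hq hp hpq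
      (by simp [hgq]) (by rw [hgp]; ring) hcd
    refine ⟨s, t, hs, ht, hst, ?_⟩
    have : g '' Icc s t = (fun y => c + d - y) '' ((fun x => c + d - g x) '' Icc s t) := by
      rw [← image_comp]
      apply image_congr
      intro x _
      simp
    rw [this, him, image_const_sub_Icc]
    congr 1 <;> ring

lemma real_fix {g : ℝ → ℝ} {s t : ℝ} (hst : s ≤ t) (hg : ContinuousOn g (Icc s t))
    (hsub : Icc s t ⊆ g '' Icc s t) : ∃ x ∈ Icc s t, g x = x := by
  obtain ⟨u, hu, hgu⟩ := hsub ⟨le_refl s, hst⟩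
  obtain ⟨v, hv, hgv⟩ := hsub ⟨hst, le_refl t⟩
  have husub : uIcc u v ⊆ Icc s t := uIcc_subset_Icc hu hv
  have hcont : ContinuousOn (fun x => g x - x) (uIcc u v) :=
    (hg.mono husub).sub continuousOn_id
  have h0 : (0 : ℝ) ∈ uIcc (g u - u) (g v - v) := by
    rw [mem_uIcc]
    left
    constructor
    · rw [hgu]; linarith [hu.1]
    · rw [hgv]; linarith [hv.2]
  obtain ⟨x, hx, hgx⟩ := intermediate_value_uIcc hcont h0
  exact ⟨x, husub hx, by linarith [sub_eq_zero.mp hgx]⟩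

-- covering lemma on arcs
lemma arc_subcover {f : ℂ → ℂ} {p q cT dT c' d' : ℂ}
    (hpS : p ∈ Sspace) (hqS : q ∈ Sspace) (hcTS : cT ∈ Sspace) (hdTS : dT ∈ Sspace)
    (hf : ContinuousOn f (arcS p q)) (hfim : f '' arcS p q = arcS cT dT)
    (hc' : c' ∈ arcS cT dT) (hd' : d' ∈ arcS cT dT) :
    ∃ u v, u ∈ arcS p q ∧ v ∈ arcS p q ∧ f '' arcS u v = arcS c' d' := by
  set γP := gammaA p q
  set cP := coordA p q
  set hT := coordA cT dT
  set loP := min (cP p) (cP q) with hloP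
  set hiP := max (cP p) (cP q) with hhiP
  have harcP : arcS p q = γP '' Icc loP hiP := arc_eq_image hpS hqS
  have hmaps : MapsTo γP (Icc loP hiP) (arcS p q) := by
    rw [harcP]; exact mapsTo_image _ _
  have hgcont : ContinuousOn (hT ∘ f ∘ γP) (Icc loP hiP) := by
    apply (continuous_coordA cT dT).comp_continuousOn
    exact hf.comp (continuous_gammaA p q).continuousOn hmaps
  have hgim : (hT ∘ f ∘ γP) '' Icc loP hiP =
      Icc (min (hT cT) (hT dT)) (max (hT cT) (hT dT)) := by
    rw [image_comp, image_comp, ← harcP, hfim]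
    exact coord_image_arc hcTS hdTS
  have hc's : hT c' ∈ Icc (min (hT cT) (hT dT)) (max (hT cT) (hT dT)) :=
    coord_mem_Icc hcTS hdTS hc'
  have hd's : hT d' ∈ Icc (min (hT cT) (hT dT)) (max (hT cT) (hT dT)) :=
    coord_mem_Icc hcTS hdTS hd'
  have hsub : Icc (min (hT c') (hT d')) (max (hT c') (hT d')) ⊆ (hT ∘ f ∘ γP) '' Icc loP hiP := by
    rw [hgim]
    exact Icc_subset_Icc (le_min hc's.1 hd's.1) (max_le hc's.2 hd's.2)
  obtain ⟨s, t, hs, ht, hst, him⟩ := real_cover hgcont (min_le_max) hsub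
  refine ⟨γP s, γP t, ?_, ?_, ?_⟩
  · rw [harcP]; exact mem_image_of_mem _ hs
  · rw [harcP]; exact mem_image_of_mem _ ht
  have huP : γP s ∈ arcS p q := by rw [harcP]; exact mem_image_of_mem _ hs
  have hvP : γP t ∈ arcS p q := by rw [harcP]; exact mem_image_of_mem _ ht
  have harcuv : arcS (γP s) (γP t) = γP '' Icc s t := by
    rw [subarc_eq_image hpS hqS huP hvP]
    show gammaA p q '' Icc (min (cP (γP s)) (cP (γP t))) (max (cP (γP s)) (cP (γP t))) = _
    rw [show cP (γP s) = s from coordA_gammaA p q s, show cP (γP t) = t from coordA_gammaA p q t,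
      min_eq_left hst, max_eq_right hst]
  rw [harcuv]
  -- both sides are subsets of the target arc with the same coordinate image
  have hA1 : f '' (γP '' Icc s t) ⊆ arcS cT dT := by
    rw [← hfim]
    apply image_mono
    rw [harcP]
    exact image_mono (Icc_subset_Icc hs.1 ht.2)
  have hA2 : arcS c' d' ⊆ arcS cT dT := arc_sub_arc hcTS hdTS hc' hd'
  have hIm1 : hT '' (f '' (γP '' Icc s t)) = Icc (min (hT c') (hT d')) (max (hT c') (hT d')) := by
    rw [← image_comp, ← image_comp]
    exact him
  have hIm2 : hT '' arcS c' d' = Icc (min (hT c') (hT d')) (max (hT c') (hT d')) :=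
    coord_image_subarc hcTS hdTS hc' hd'
  have key : ∀ A B : Set ℂ, A ⊆ arcS cT dT → B ⊆ arcS cT dT → hT '' A = hT '' B → A ⊆ B := by
    intro A B hA hB hAB z hz
    have : hT z ∈ hT '' B := by rw [← hAB]; exact mem_image_of_mem _ hz
    obtain ⟨w, hw, hww⟩ := this
    have h1 : gammaA cT dT (hT z) = z := gamma_coord_mem hcTS hdTS (hA hz)
    have h2 : gammaA cT dT (hT w) = w := gamma_coord_mem hcTS hdTS (hB hw)
    rw [← h1, ← hww, h2]
    exact hw
  exact le_antisymm (key _ _ hA1 hA2 (hIm1.trans hIm2.symm)) (key _ _ hA2 hA1 (hIm2.trans hIm1.symm))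

-- fixed point lemma on arcs
lemma arc_fix {G : ℂ → ℂ} {a b u v : ℂ} (haS : a ∈ Sspace) (hbS : b ∈ Sspace)
    (hu : u ∈ arcS a b) (hv : v ∈ arcS a b)
    (hG : ContinuousOn G (arcS u v)) (hGim : G '' arcS u v = arcS a b) :
    ∃ x ∈ arcS u v, G x = x := by
  set γ := gammaA a b
  set c := coordA a b
  set s := min (c u) (c v) with hs
  set t := max (c u) (c v) with ht
  have harc : arcS u v = γ '' Icc s t := subarc_eq_image haS hbS hu hv
  have hmaps : MapsTo γ (Icc s t) (arcS u v) := by rw [harc]; exact mapsTo_image _ _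
  have hgcont : ContinuousOn (c ∘ G ∘ γ) (Icc s t) :=
    (continuous_coordA a b).comp_continuousOn (hG.comp (continuous_gammaA a b).continuousOn hmaps)
  have hgim : (c ∘ G ∘ γ) '' Icc s t = Icc (min (c a) (c b)) (max (c a) (c b)) := by
    rw [image_comp, image_comp, ← harc, hGim]
    exact coord_image_arc haS hbS
  have hsub : Icc s t ⊆ (c ∘ G ∘ γ) '' Icc s t := by
    rw [hgim]
    exact Icc_subset_Icc (le_min (coord_mem_Icc haS hbS hu).1 (coord_mem_Icc haS hbS hv).1)
      (max_le (coord_mem_Icc haS hbS hu).2 (coord_mem_Icc haS hbS hv).2)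
  obtain ⟨x0, hx0, hfix⟩ := real_fix min_le_max hgcont hsub
  refine ⟨γ x0, by rw [harc]; exact mem_image_of_mem _ hx0, ?_⟩
  have hGmem : G (γ x0) ∈ arcS a b := by
    rw [← hGim]
    exact mem_image_of_mem _ (by rw [harc]; exact mem_image_of_mem _ hx0)
  have h1 : gammaA a b (c (G (γ x0))) = G (γ x0) := gamma_coord_mem haS hbS hGmem
  have h2 : c (G (γ x0)) = x0 := hfix
  rw [← h1, h2]

def chainMap (Fs : ℕ → ℂ → ℂ) : ℕ → ℂ → ℂ
  | 0 => id
  | (k+1) => Fs k ∘ chainMap Fs k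

theorem statement10_aux (n : ℕ) (I : ℕ → Set ℂ) (Fs : ℕ → ℂ → ℂ)
    (hI : ∀ i ≤ n, ∃ a b : ℂ, a ∈ Sspace ∧ b ∈ Sspace ∧ a ≠ b ∧ I i = sHull {a, b})
    (hIn : I n = I 0)
    (hcont : ∀ i < n, ContinuousOn (Fs i) (I i))
    (hmaps : ∀ i < n, Set.MapsTo (Fs i) (I i) Sspace)
    (hcov : ∀ i < n, ∃ a b : ℂ, a ∈ I i ∧ b ∈ I i ∧ sHull {a, b} ⊆ I i ∧
      Fs i '' sHull {a, b} = I (i + 1)) :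
    ∃ x : ℕ → ℂ, (∀ i ≤ n, x i ∈ I i) ∧ (∀ i < n, Fs i (x i) = x (i + 1)) ∧
      x n = x 0 := by
  have hIarc : ∀ i, i ≤ n → ∃ a b, a ∈ Sspace ∧ b ∈ Sspace ∧ I i = arcS a b := by
    intro i hi
    obtain ⟨a, b, haS, hbS, _, hEq⟩ := hI i hi
    exact ⟨a, b, haS, hbS, by rw [hEq, sHull_pair haS hbS]⟩
  have hIS : ∀ i, i ≤ n → I i ⊆ Sspace := by
    intro i hi
    obtain ⟨a, b, haS, hbS, hEq⟩ := hIarc i hi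
    rw [hEq]; exact arcS_subset_S haS hbS
  obtain ⟨a0, b0, ha0S, hb0S, hEq0⟩ := hIarc 0 (Nat.zero_le n)
  have hcovarc : ∀ i, i < n → ∃ p q, p ∈ I i ∧ q ∈ I i ∧ arcS p q ⊆ I i ∧
      Fs i '' arcS p q = I (i + 1) := by
    intro i hi
    obtain ⟨p, q, hp, hq, hhull, him⟩ := hcov i hi
    have hpS : p ∈ Sspace := hIS i hi.le hp
    have hqS : q ∈ Sspace := hIS i hi.le hq
    rw [sHull_pair hpS hqS] at hhull him
    exact ⟨p, q, hp, hq, hhull, him⟩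
  have KEY : ∀ k : ℕ, k ≤ n → ∃ e : ℕ → ℂ × ℂ,
      (∀ j, n - k ≤ j → j ≤ n → (e j).1 ∈ I j ∧ (e j).2 ∈ I j ∧ arcS (e j).1 (e j).2 ⊆ I j) ∧
      arcS (e n).1 (e n).2 = I 0 ∧
      ∀ j, n - k ≤ j → j < n →
        Fs j '' arcS (e j).1 (e j).2 = arcS (e (j+1)).1 (e (j+1)).2 := by
    intro k
    induction k with
    | zero =>
      intro _
      refine ⟨fun _ => (a0, b0), ?_, hEq0.symm, ?_⟩
      · intro j hj1 hj2
        have hj : j = n := le_antisymm hj2 (by omega)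
        subst hj
        have h1 : I j = arcS a0 b0 := hIn.trans hEq0
        refine ⟨?_, ?_, h1.symm.subset⟩
        · rw [h1]; exact left_mem_arcS (S_im_nonneg ha0S) (S_im_nonneg hb0S)
        · rw [h1]; exact right_mem_arcS (S_im_nonneg ha0S) (S_im_nonneg hb0S)
      · intro j hj1 hj2; omega
    | succ k ih =>
      intro hk1
      obtain ⟨e, h1, h2, h3⟩ := ih (Nat.le_of_succ_le hk1)
      set i := n - (k+1) with hidef
      have hin : i < n := by omega
      have hik : n - k = i + 1 := by omega
      obtain ⟨a1, b1, ha1S, hb1S, hEq1⟩ := hIarc (i+1) (by omega)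
      obtain ⟨p, q, hp, hq, hpq, him⟩ := hcovarc i hin
      have hpS : p ∈ Sspace := hIS i hin.le hp
      have hqS : q ∈ Sspace := hIS i hin.le hq
      have hfim : Fs i '' arcS p q = arcS a1 b1 := him.trans hEq1
      have hc' : (e (i+1)).1 ∈ arcS a1 b1 := by
        rw [← hEq1]; exact (h1 (i+1) (by omega) (by omega)).1
      have hd' : (e (i+1)).2 ∈ arcS a1 b1 := by
        rw [← hEq1]; exact (h1 (i+1) (by omega) (by omega)).2.1
      obtain ⟨u, v, hu, hv, hfuv⟩ := arc_subcover hpS hqS ha1S hb1S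
        ((hcont i hin).mono hpq) hfim hc' hd'
      refine ⟨Function.update e i (u, v), ?_, ?_, ?_⟩
      · intro j hj1 hj2
        rcases eq_or_lt_of_le hj1 with heq | hlt
        · subst heq
          rw [Function.update_self]
          exact ⟨hpq hu, hpq hv, (arc_sub_arc hpS hqS hu hv).trans hpq⟩
        · rw [Function.update_of_ne (by omega : j ≠ i)]
          exact h1 j (by omega) hj2
      · rw [Function.update_of_ne (by omega : n ≠ i)]
        exact h2
      · intro j hj1 hjn
        rcases eq_or_lt_of_le hj1 with heq | hlt
        · subst heq
          rw [Function.update_self, Function.update_of_ne (by omega : i + 1 ≠ i)]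
          exact hfuv
        · rw [Function.update_of_ne (by omega : j ≠ i), Function.update_of_ne (by omega : j + 1 ≠ i)]
          exact h3 j (by omega) hjn
  obtain ⟨e, h1, h2, h3⟩ := KEY n (le_refl n)
  have h1' := fun j (hj : j ≤ n) => h1 j (by omega) hj
  -- chain map properties
  have hch : ∀ k, k ≤ n → chainMap Fs k '' arcS (e 0).1 (e 0).2 = arcS (e k).1 (e k).2 ∧
      ContinuousOn (chainMap Fs k) (arcS (e 0).1 (e 0).2) := by
    intro k
    induction k with
    | zero => intro _; exact ⟨image_id _, continuousOn_id⟩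
    | succ k ih =>
      intro hk
      obtain ⟨hima, hconta⟩ := ih (by omega)
      constructor
      · show (Fs k ∘ chainMap Fs k) '' _ = _
        rw [image_comp, hima]
        exact h3 k (by omega) (by omega)
      · show ContinuousOn (Fs k ∘ chainMap Fs k) _
        apply ContinuousOn.comp ((hcont k (by omega)))  hconta
        intro z hz
        have : chainMap Fs k z ∈ arcS (e k).1 (e k).2 := by
          rw [← hima]; exact mem_image_of_mem _ hz
        exact (h1' k (by omega)).2.2 this
  -- fixed point
  have hG := hch n (le_refl n)
  have hu0 : (e 0).1 ∈ arcS a0 b0 := by rw [← hEq0]; exact (h1' 0 (Nat.zero_le n)).1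
  have hv0 : (e 0).2 ∈ arcS a0 b0 := by rw [← hEq0]; exact (h1' 0 (Nat.zero_le n)).2.1
  have hGim : chainMap Fs n '' arcS (e 0).1 (e 0).2 = arcS a0 b0 := by
    rw [hG.1, h2, hEq0]
  obtain ⟨x0, hx0, hfix⟩ := arc_fix ha0S hb0S hu0 hv0 hG.2 hGim
  refine ⟨fun i => chainMap Fs i x0, ?_, ?_, ?_⟩
  · intro i hi
    have : chainMap Fs i x0 ∈ arcS (e i).1 (e i).2 := by
      rw [← (hch i hi).1]
      exact mem_image_of_mem _ hx0
    exact (h1' i hi).2.2 this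
  · intro i _
    rfl
  · exact hfix

/-- Given a loop of coverings `I_0 → I_1 → ⋯ → I_n = I_0` for continuous
maps `F_i : I_i → S`, there are points `x_i ∈ I_i` with `F_i(x_i) = x_{i+1}` and
`x_n = x_0`. -/
theorem statement10 (n : ℕ) (I : ℕ → Set ℂ) (Fs : ℕ → ℂ → ℂ)
    (hI : ∀ i ≤ n, IsCNInterval (I i)) (hIn : I n = I 0)
    (hcont : ∀ i < n, ContinuousOn (Fs i) (I i))
    (hmaps : ∀ i < n, Set.MapsTo (Fs i) (I i) Sspace)
    (hcov : ∀ i < n, Covers (Fs i) (I i) (I (i + 1))) :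
    ∃ x : ℕ → ℂ, (∀ i ≤ n, x i ∈ I i) ∧ (∀ i < n, Fs i (x i) = x (i + 1)) ∧
      x n = x 0 := by
  exact statement10_aux n I Fs hI hIn hcont hmaps hcov

end
end

section
/- Let F ∈ L_1(S) and let (I_0,<_0), (I_1,<_1), …, (I_{k−1},<_{k−1}) be compact nondegenerate intervals of S endowed with orders such that (I_0,<_0) →^{ε_1}_{F^{n_1}−p_1} (I_1,<_1) →^{ε_2}_{F^{n_2}−p_2} ⋯ →^{ε_{k}}_{F^{n_k}−p_k} (I_0,<_0) is a loop of signed coverings of positive sign, where n_i ∈ ℕ and p_i ∈ ℤ. For 1 ≤ i ≤ k set m_i := n_1 + ⋯ + n_i and p̂_i := p_1 + ⋯ + p_i. Then there exists x_0 ∈ I_0 such that F^{m_k}(x_0) = x_0 + p̂_k and F^{m_i}(x_0) ∈ I_i + p̂_i for all 1 ≤ i ≤ k−1. -/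
open Set Filter Function

noncomputable section

namespace S13

lemma mem_S_iff {z : ℂ} :
    z ∈ Sspace ↔ z.im = 0 ∨ ((∃ m : ℤ, z.re = (m : ℝ)) ∧ 0 ≤ z.im ∧ z.im ≤ 1) := by
  simp [Sspace, realAxis, branches, Set.mem_Icc, and_assoc]

lemma S_im_nonneg {z : ℂ} (hz : z ∈ Sspace) : 0 ≤ z.im := by
  rcases mem_S_iff.mp hz with h | h
  · rw [h]
  · exact h.2.1

lemma S_im_le_one {z : ℂ} (hz : z ∈ Sspace) : z.im ≤ 1 := by
  rcases mem_S_iff.mp hz with h | h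
  · rw [h]; norm_num
  · exact h.2.2

lemma S_branch {z : ℂ} (hz : z ∈ Sspace) (h : 0 < z.im) : ∃ m : ℤ, z.re = (m : ℝ) := by
  rcases mem_S_iff.mp hz with h' | h'
  · rw [h'] at h; exact absurd h (lt_irrefl 0)
  · exact h'.1

lemma mem_S_axis (x : ℝ) : (⟨x, 0⟩ : ℂ) ∈ Sspace := mem_S_iff.mpr (Or.inl rfl)

lemma mem_S_pt {x y : ℝ} (hm : ∃ m : ℤ, x = (m : ℝ)) (h0 : 0 ≤ y) (h1 : y ≤ 1) :
    (⟨x, y⟩ : ℂ) ∈ Sspace := mem_S_iff.mpr (Or.inr ⟨hm, h0, h1⟩)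

lemma int_gap {x y : ℝ} (hx : ∃ m : ℤ, x = (m : ℝ)) (hy : ∃ m : ℤ, y = (m : ℝ))
    (hne : x ≠ y) : 1 ≤ |x - y| := by
  obtain ⟨m, rfl⟩ := hx; obtain ⟨m', rfl⟩ := hy
  have hmm : m ≠ m' := by intro h; exact hne (by rw [h])
  have : (1 : ℤ) ≤ |m - m'| := Int.one_le_abs (by omega)
  calc (1:ℝ) ≤ ((|m - m'| : ℤ) : ℝ) := by exact_mod_cast this
    _ = |(m:ℝ) - m'| := by push_cast [Int.cast_abs]; ring_nf

/-- The basic bump function: equals `min w.im H` on the branch at `c`, and `0`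
on the rest of `S`. -/
def bump (c H : ℝ) (w : ℂ) : ℝ := min (min w.im H) (H * max 0 (1 - |w.re - c|))

lemma bump_continuous (c H : ℝ) : Continuous (bump c H) := by
  unfold bump; fun_prop

lemma bump_nonneg {c H : ℝ} {w : ℂ} (him : 0 ≤ w.im) (hH : 0 ≤ H) : 0 ≤ bump c H w := by
  unfold bump
  have : 0 ≤ H * max 0 (1 - |w.re - c|) := mul_nonneg hH (le_max_left _ _)
  positivity

lemma bump_le_im {c H : ℝ} {w : ℂ} : bump c H w ≤ w.im :=
  le_trans (min_le_left _ _) (min_le_left _ _)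

lemma bump_le_H {c H : ℝ} {w : ℂ} : bump c H w ≤ H :=
  le_trans (min_le_left _ _) (min_le_right _ _)

lemma bump_branch {c H : ℝ} {w : ℂ} (h : w.re = c) : bump c H w = min w.im H := by
  unfold bump
  rw [h, sub_self, abs_zero, sub_zero, max_eq_right (by norm_num : (0:ℝ) ≤ 1), mul_one,
    min_assoc, min_self]

lemma bump_zero {c H : ℝ} {w : ℂ} (hw : w ∈ Sspace) (hH : 0 ≤ H)
    (hc : 0 < H → ∃ m : ℤ, c = (m : ℝ)) (hne : w.re ≠ c) : bump c H w = 0 := by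
  rcases eq_or_lt_of_le (S_im_nonneg hw) with h0 | h0
  · have h1 : min w.im H = 0 := by rw [← h0]; exact min_eq_left hH
    unfold bump
    rw [h1]
    exact min_eq_left (mul_nonneg hH (le_max_left _ _))
  · rcases eq_or_lt_of_le hH with hH0 | hH0
    · have : bump c H w ≤ 0 := le_trans bump_le_H hH0.symm.le
      exact le_antisymm this (bump_nonneg (S_im_nonneg hw) hH)
    · have hgap : 1 ≤ |w.re - c| := int_gap (S_branch hw h0) (hc hH0) hne
      have : max 0 (1 - |w.re - c|) = 0 := max_eq_left (by linarith)
      unfold bump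
      rw [this, mul_zero]
      exact min_eq_right (by positivity)


structure ArcData where
  L : ℝ
  gam : ℝ → ℂ
  rho : ℂ → ℝ

structure ArcGood (a b : ℂ) (D : ArcData) : Prop where
  hL : 0 < D.L
  hgam0 : D.gam 0 = a
  hgamL : D.gam D.L = b
  hgamc : Continuous D.gam
  hrhoc : Continuous D.rho
  hmem : ∀ t ∈ Icc (0:ℝ) D.L, D.gam t ∈ Sspace
  hrmem : ∀ w ∈ Sspace, D.rho w ∈ Icc (0:ℝ) D.L
  hsec : ∀ t ∈ Icc (0:ℝ) D.L, D.rho (D.gam t) = t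
  hplat : ∀ w ∈ Sspace, w ∉ D.gam '' Icc (0:ℝ) D.L →
    ∃ ε > 0, ∀ w' ∈ Sspace, dist w' w < ε → D.rho w' = D.rho w
  hmin : ∀ C : Set ℂ, a ∈ C → b ∈ C → C ⊆ Sspace → IsClosed C → IsConnected C →
    D.gam '' Icc (0:ℝ) D.L ⊆ C

namespace ArcGood

variable {a b : ℂ} {D : ArcData}

lemma img_subset_S (h : ArcGood a b D) : D.gam '' Icc (0:ℝ) D.L ⊆ Sspace := by
  rintro _ ⟨t, ht, rfl⟩; exact h.hmem t ht

lemma img_closed (h : ArcGood a b D) : IsClosed (D.gam '' Icc (0:ℝ) D.L) :=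
  (isCompact_Icc.image h.hgamc).isClosed

lemma img_connected (h : ArcGood a b D) : IsConnected (D.gam '' Icc (0:ℝ) D.L) := by
  refine ⟨⟨a, ⟨0, ⟨le_refl 0, h.hL.le⟩, h.hgam0⟩⟩, ?_⟩
  exact (isPreconnected_Icc).image _ h.hgamc.continuousOn

lemma gam_rho_img (h : ArcGood a b D) {w : ℂ} (hw : w ∈ D.gam '' Icc (0:ℝ) D.L) : D.gam (D.rho w) = w := by
  obtain ⟨t, ht, rfl⟩ := hw
  rw [h.hsec t ht]

lemma hull_eq (h : ArcGood a b D) : sHull {a, b} = D.gam '' Icc (0:ℝ) D.L := by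
  apply le_antisymm
  · apply sInter_subset_of_mem
    refine ⟨?_, h.img_subset_S, h.img_closed, h.img_connected⟩
    rintro z hz
    rcases hz with rfl | hz
    · exact ⟨0, ⟨le_refl 0, h.hL.le⟩, h.hgam0⟩
    · rcases hz with rfl
      exact ⟨D.L, ⟨h.hL.le, le_refl _⟩, h.hgamL⟩
  · intro z hz
    intro C hC
    obtain ⟨hab, hCS, hCcl, hCco⟩ := hC
    exact h.hmin C (hab (by simp)) (hab (by simp)) hCS hCcl hCco hz

/-- The partial hull `sHull {a, y}` for `y` on the arc is contained in the initial
segment of the arc. -/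
lemma hull_init (h : ArcGood a b D) {y : ℂ} (hy : y ∈ D.gam '' Icc (0:ℝ) D.L) :
    sHull {a, y} ⊆ D.gam '' Icc (0:ℝ) (D.rho y) := by
  obtain ⟨s, hs, rfl⟩ := hy
  rw [h.hsec s hs]
  apply sInter_subset_of_mem
  have hsub : Icc (0:ℝ) s ⊆ Icc 0 D.L := Icc_subset_Icc (le_refl _) hs.2
  refine ⟨?_, ?_, (isCompact_Icc.image h.hgamc).isClosed, ?_⟩
  · rintro z hz
    rcases hz with rfl | hz
    · exact ⟨0, ⟨le_refl 0, hs.1⟩, h.hgam0⟩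
    · rcases hz with rfl
      exact ⟨s, ⟨hs.1, le_refl _⟩, rfl⟩
  · rintro _ ⟨t, ht, rfl⟩; exact h.hmem t (hsub ht)
  · exact ⟨⟨a, ⟨0, ⟨le_refl 0, hs.1⟩, h.hgam0⟩⟩, (isPreconnected_Icc).image _ h.hgamc.continuousOn⟩

/-- extract ordered parameters from a covering hypothesis. -/
lemma order_le (h : ArcGood a b D) {x y : ℂ} (hxA : x ∈ D.gam '' Icc (0:ℝ) D.L)
    (hyA : y ∈ D.gam '' Icc (0:ℝ) D.L) (hxy : x ∈ sHull {a, y}) : D.rho x ≤ D.rho y := by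
  have := h.hull_init hyA hxy
  obtain ⟨u, hu, rfl⟩ := this
  rw [h.hsec u ⟨hu.1, le_trans hu.2 (h.hrmem y (h.img_subset_S hyA)).2⟩]
  exact hu.2

end ArcGood

/-- generic separation lemma -/
lemma connected_mem_of_sep {C U V : Set ℂ} {z a₀ b₀ : ℂ}
    (hC : IsConnected C) (hCS : C ⊆ Sspace) (haC : a₀ ∈ C) (hbC : b₀ ∈ C)
    (hU : IsOpen U) (hV : IsOpen V) (haU : a₀ ∈ U) (hbV : b₀ ∈ V)
    (hcov : ∀ w ∈ Sspace, w ≠ z → w ∈ U ∨ w ∈ V)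
    (hdisj : ∀ w ∈ Sspace, w ∈ U → w ∈ V → False) : z ∈ C := by
  by_contra hz
  have hsub : C ⊆ U ∪ V := by
    intro w hw
    exact hcov w (hCS hw) (fun h => hz (h ▸ hw))
  obtain ⟨w, hwC, hwU, hwV⟩ := hC.isPreconnected U V hU hV hsub ⟨a₀, haC, haU⟩ ⟨b₀, hbC, hbV⟩
  exact hdisj w (hCS hwC) hwU hwV



lemma abs_re_le_dist (z w : ℂ) : |z.re - w.re| ≤ dist z w := by
  rw [Complex.dist_eq]
  calc |z.re - w.re| = |(z - w).re| := by rw [Complex.sub_re]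
    _ ≤ ‖z - w‖ := Complex.abs_re_le_norm _

lemma abs_im_le_dist (z w : ℂ) : |z.im - w.im| ≤ dist z w := by
  rw [Complex.dist_eq]
  calc |z.im - w.im| = |(z - w).im| := by rw [Complex.sub_im]
    _ ≤ ‖z - w‖ := Complex.abs_im_le_norm _

lemma re_eq_of_branches {x y : ℝ} (hx : ∃ m : ℤ, x = (m : ℝ)) (hy : ∃ m : ℤ, y = (m : ℝ))
    (h : |x - y| < 1) : x = y := by
  by_contra hne
  exact absurd h (not_lt.mpr (int_gap hx hy hne))

/-! ### Case A : the two endpoints lie on the same vertical branch -/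

def caseA (a b : ℂ) : ArcData where
  L := b.im - a.im
  gam := fun t => ⟨a.re, a.im + t⟩
  rho := fun w => min (b.im - a.im) (max 0 (bump a.re b.im w - a.im))

theorem caseA_good {a b : ℂ} (ha : a ∈ Sspace) (hb : b ∈ Sspace) (hre : a.re = b.re)
    (him : a.im < b.im) : ArcGood a b (caseA a b) := by
  have h0a : 0 ≤ a.im := S_im_nonneg ha
  have hb1 : b.im ≤ 1 := S_im_le_one hb
  have hbpos : 0 < b.im := lt_of_le_of_lt h0a him
  have hm : ∃ m : ℤ, a.re = (m : ℝ) := by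
    rw [hre]; exact S_branch hb hbpos
  have hL : (0:ℝ) < b.im - a.im := by linarith
  -- the image characterization
  have himg : ∀ w : ℂ, w.re = a.re → a.im ≤ w.im → w.im ≤ b.im →
      w ∈ (caseA a b).gam '' Icc (0:ℝ) (caseA a b).L := by
    intro w h1 h2 h3
    refine ⟨w.im - a.im, ⟨by linarith, ?_⟩, ?_⟩
    · show w.im - a.im ≤ b.im - a.im
      linarith
    · exact Complex.ext h1.symm (by show a.im + (w.im - a.im) = w.im; ring)
  -- constant value off the branch
  have sub1 : ∀ w' ∈ Sspace, w'.re ≠ a.re → (caseA a b).rho w' = 0 := by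
    intro w' hw' hne
    have hb0 : bump a.re b.im w' = 0 := bump_zero hw' hbpos.le (fun _ => hm) hne
    simp only [caseA, hb0]
    rw [max_eq_left (by linarith), min_eq_right hL.le]
  have sub2 : ∀ w' ∈ Sspace, w'.im < a.im → (caseA a b).rho w' = 0 := by
    intro w' hw' hlt
    have : bump a.re b.im w' ≤ w'.im := bump_le_im
    show min (b.im - a.im) (max 0 (bump a.re b.im w' - a.im)) = 0
    rw [max_eq_left (by linarith), min_eq_right hL.le]
  have sub3 : ∀ w' ∈ Sspace, w'.re = a.re → b.im ≤ w'.im →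
      (caseA a b).rho w' = (caseA a b).L := by
    intro w' hw' hre' hge
    have : bump a.re b.im w' = b.im := by
      rw [bump_branch hre', min_eq_right hge]
    show min (b.im - a.im) (max 0 (bump a.re b.im w' - a.im)) = b.im - a.im
    rw [this, max_eq_right (by linarith), min_self]
  refine ⟨hL, ?_, ?_, ?_, ?_, ?_, ?_, ?_, ?_, ?_⟩
  · exact Complex.ext rfl (add_zero a.im)
  · exact Complex.ext hre (by show a.im + (b.im - a.im) = b.im; ring)
  · show Continuous fun t : ℝ => (⟨a.re, a.im + t⟩ : ℂ)
    simp only [Complex.mk_eq_add_mul_I]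
    fun_prop
  · exact continuous_const.min (continuous_const.max
      ((bump_continuous a.re b.im).sub continuous_const))
  · intro t ht
    simp only [caseA] at ht ⊢
    exact mem_S_pt hm (by linarith [ht.1]) (by linarith [ht.2])
  · intro w hw
    constructor
    · exact le_min hL.le (le_max_left _ _)
    · exact min_le_left _ _
  · intro t ht
    simp only [caseA] at ht ⊢
    have h1 : bump a.re b.im ⟨a.re, a.im + t⟩ = a.im + t := by
      rw [bump_branch (show (⟨a.re, a.im + t⟩ : ℂ).re = a.re from rfl)]
      exact min_eq_left (by show a.im + t ≤ b.im; linarith [ht.2])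
    rw [h1]
    rw [show a.im + t - a.im = t by ring, max_eq_right ht.1, min_eq_right ht.2]
  · -- plateau
    intro w hw hnimg
    by_cases hcre : w.re = a.re
    · rcases lt_or_ge w.im a.im with hlt | hge
      · refine ⟨a.im - w.im, by linarith, ?_⟩
        intro w' hw' hd
        have := abs_im_le_dist w' w
        have hlt' : w'.im < a.im := by
          have := abs_lt.mp (lt_of_le_of_lt this hd)
          linarith [this.2]
        rw [sub2 w' hw' hlt', sub2 w hw hlt]
      · rcases le_or_gt w.im b.im with hle | hgt
        · exact absurd (himg w hcre hge hle) hnimg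
        · refine ⟨min (w.im - b.im) 1, lt_min (by linarith) one_pos, ?_⟩
          intro w' hw' hd
          have hdi := abs_im_le_dist w' w
          have hdr := abs_re_le_dist w' w
          have h1 : b.im < w'.im := by
            have h2 := (abs_lt.mp (lt_of_le_of_lt hdi (lt_of_lt_of_le hd (min_le_left _ _)))).1
            linarith
          have h2 : w'.re = a.re := by
            have himp : 0 < w'.im := lt_trans hbpos h1
            apply re_eq_of_branches (S_branch hw' himp) hm
            have := (abs_lt.mp (lt_of_le_of_lt hdr (lt_of_lt_of_le hd (min_le_right _ _))))
            rw [abs_lt]; constructor <;> [linarith [this.1]; linarith [this.2]]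
          rw [sub3 w' hw' h2 h1.le, sub3 w hw hcre (by linarith)]
    · refine ⟨|w.re - a.re|, abs_pos.mpr (sub_ne_zero.mpr hcre), ?_⟩
      intro w' hw' hd
      have hdr := abs_re_le_dist w' w
      have hne' : w'.re ≠ a.re := by
        intro h
        rw [h] at hdr
        have : |a.re - w.re| = |w.re - a.re| := abs_sub_comm _ _
        linarith [lt_of_le_of_lt hdr hd]
      rw [sub1 w' hw' hne', sub1 w hw hcre]
  · -- minimality
    intro C haC hbC hCS hCcl hCco
    rintro _ ⟨t, ht, rfl⟩
    simp only [caseA] at ht ⊢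
    rcases eq_or_lt_of_le ht.1 with h0 | h0
    · rw [← h0]
      convert haC using 1
      exact Complex.ext rfl (by simp)
    rcases eq_or_lt_of_le ht.2 with hL' | hL'
    · rw [hL']
      convert hbC using 1
      exact Complex.ext hre (by simp)
    set z : ℂ := ⟨a.re, a.im + t⟩ with hz
    apply connected_mem_of_sep (z := z) (a₀ := a) (b₀ := b) hCco hCS haC hbC
      (U := {w : ℂ | w.re ≠ a.re} ∪ {w : ℂ | w.im < a.im + t})
      (V := {w : ℂ | |w.re - a.re| < w.im - (a.im + t)})
    · exact (isOpen_ne.preimage Complex.continuous_re).union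
        (isOpen_lt Complex.continuous_im continuous_const)
    · exact isOpen_lt (by fun_prop) (by fun_prop)
    · exact Or.inr (by simp; linarith)
    · show |b.re - a.re| < b.im - (a.im + t)
      rw [← hre, sub_self, abs_zero]
      linarith
    · intro w hw hwz
      by_cases h1 : w.re = a.re
      · rcases lt_trichotomy w.im (a.im + t) with h2 | h2 | h2
        · exact Or.inl (Or.inr h2)
        · exact absurd (show w = z from Complex.ext h1 h2) hwz
        · exact Or.inr (by show |w.re - a.re| < _; rw [h1, sub_self, abs_zero]; linarith)
      · exact Or.inl (Or.inl h1)
    · intro w hw hU hV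
      have hV' : |w.re - a.re| < w.im - (a.im + t) := hV
      have himpos : 0 < w.im := by
        have : (0:ℝ) ≤ |w.re - a.re| := abs_nonneg _
        linarith
      have h1 : w.re = a.re := by
        apply re_eq_of_branches (S_branch hw himpos) hm
        have := S_im_le_one hw
        linarith
      rcases hU with h2 | h2
      · exact h2 h1
      · have h3 : w.im < a.im + t := h2
        have : (0:ℝ) ≤ |w.re - a.re| := abs_nonneg _
        linarith


/-! ### Separation patterns -/

lemma sep_vert {c h : ℝ} (hc : ∃ m : ℤ, c = (m : ℝ)) (hh : 0 < h) {C : Set ℂ}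
    (hC : IsConnected C) (hCS : C ⊆ Sspace) {u v : ℂ} (huC : u ∈ C) (hvC : v ∈ C)
    (hu : u.re ≠ c ∨ u.im < h) (hv : v.re = c ∧ h < v.im) : (⟨c, h⟩ : ℂ) ∈ C := by
  apply connected_mem_of_sep (z := (⟨c, h⟩ : ℂ)) (a₀ := u) (b₀ := v) hC hCS huC hvC
    (U := {w : ℂ | w.re ≠ c} ∪ {w : ℂ | w.im < h})
    (V := {w : ℂ | |w.re - c| < w.im - h})
  · exact (isOpen_ne.preimage Complex.continuous_re).union
      (isOpen_lt Complex.continuous_im continuous_const)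
  · exact isOpen_lt (by fun_prop) (by fun_prop)
  · exact hu
  · show |v.re - c| < v.im - h
    rw [hv.1, sub_self, abs_zero]; linarith [hv.2]
  · intro w hw hwz
    by_cases h1 : w.re = c
    · rcases lt_trichotomy w.im h with h2 | h2 | h2
      · exact Or.inl (Or.inr h2)
      · exact absurd (Complex.ext h1 h2) hwz
      · refine Or.inr ?_
        show |w.re - c| < w.im - h
        rw [h1, sub_self, abs_zero]; linarith
    · exact Or.inl (Or.inl h1)
  · intro w hw hU hV
    have hV' : |w.re - c| < w.im - h := hV
    have himpos : 0 < w.im := by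
      have : (0:ℝ) ≤ |w.re - c| := abs_nonneg _
      linarith
    have h1 : w.re = c := by
      apply re_eq_of_branches (S_branch hw himpos) hc
      have := S_im_le_one hw
      linarith
    rcases hU with h2 | h2
    · exact h2 h1
    · have h3 : w.im < h := h2
      have : (0:ℝ) ≤ |w.re - c| := abs_nonneg _
      linarith

lemma sep_horiz {c : ℝ} (hc : ∃ m : ℤ, c = (m : ℝ)) {C : Set ℂ}
    (hC : IsConnected C) (hCS : C ⊆ Sspace) {u v : ℂ} (huC : u ∈ C) (hvC : v ∈ C)
    (hu : u.re < c ∨ (u.re = c ∧ 0 < u.im)) (hv : c < v.re) : (⟨c, 0⟩ : ℂ) ∈ C := by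
  apply connected_mem_of_sep (z := (⟨c, 0⟩ : ℂ)) (a₀ := u) (b₀ := v) hC hCS huC hvC
    (U := {w : ℂ | w.re < c} ∪ {w : ℂ | |w.re - c| < w.im})
    (V := {w : ℂ | c < w.re})
  · exact (isOpen_lt Complex.continuous_re continuous_const).union
      (isOpen_lt (by fun_prop) Complex.continuous_im)
  · exact isOpen_lt continuous_const Complex.continuous_re
  · rcases hu with h1 | h1
    · exact Or.inl h1
    · refine Or.inr ?_
      show |u.re - c| < u.im
      rw [h1.1, sub_self, abs_zero]; exact h1.2
  · exact hv
  · intro w hw hwz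
    rcases lt_trichotomy w.re c with h1 | h1 | h1
    · exact Or.inl (Or.inl h1)
    · have h2 : w.im ≠ 0 := fun h => hwz (Complex.ext h1 h)
      have h3 : 0 < w.im := lt_of_le_of_ne (S_im_nonneg hw) (Ne.symm h2)
      refine Or.inl (Or.inr ?_)
      show |w.re - c| < w.im
      rw [h1, sub_self, abs_zero]; exact h3
    · exact Or.inr h1
  · intro w hw hU hV
    have hV' : c < w.re := hV
    rcases hU with h1 | h1
    · exact absurd hV' (not_lt.mpr (le_of_lt h1))
    · have h2 : |w.re - c| < w.im := h1
      have himpos : 0 < w.im := lt_of_le_of_lt (abs_nonneg _) h2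
      have h3 : w.re = c := by
        apply re_eq_of_branches (S_branch hw himpos) hc
        have := S_im_le_one hw
        linarith
      rw [h3] at hV'
      exact lt_irrefl c hV'

lemma sep_horiz' {c : ℝ} (hc : ∃ m : ℤ, c = (m : ℝ)) {C : Set ℂ}
    (hC : IsConnected C) (hCS : C ⊆ Sspace) {u v : ℂ} (huC : u ∈ C) (hvC : v ∈ C)
    (hu : u.re < c) (hv : c < v.re ∨ (v.re = c ∧ 0 < v.im)) : (⟨c, 0⟩ : ℂ) ∈ C := by
  apply connected_mem_of_sep (z := (⟨c, 0⟩ : ℂ)) (a₀ := u) (b₀ := v) hC hCS huC hvC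
    (U := {w : ℂ | w.re < c})
    (V := {w : ℂ | c < w.re} ∪ {w : ℂ | |w.re - c| < w.im})
  · exact isOpen_lt Complex.continuous_re continuous_const
  · exact (isOpen_lt continuous_const Complex.continuous_re).union
      (isOpen_lt (by fun_prop) Complex.continuous_im)
  · exact hu
  · rcases hv with h1 | h1
    · exact Or.inl h1
    · refine Or.inr ?_
      show |v.re - c| < v.im
      rw [h1.1, sub_self, abs_zero]; exact h1.2
  · intro w hw hwz
    rcases lt_trichotomy w.re c with h1 | h1 | h1
    · exact Or.inl h1
    · have h2 : w.im ≠ 0 := fun h => hwz (Complex.ext h1 h)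
      have h3 : 0 < w.im := lt_of_le_of_ne (S_im_nonneg hw) (Ne.symm h2)
      refine Or.inr (Or.inr ?_)
      show |w.re - c| < w.im
      rw [h1, sub_self, abs_zero]; exact h3
    · exact Or.inr (Or.inl h1)
  · intro w hw hU hV
    have hU' : w.re < c := hU
    rcases hV with h1 | h1
    · exact absurd h1 (not_lt.mpr (le_of_lt hU'))
    · have h2 : |w.re - c| < w.im := h1
      have himpos : 0 < w.im := lt_of_le_of_lt (abs_nonneg _) h2
      have h3 : w.re = c := by
        apply re_eq_of_branches (S_branch hw himpos) hc
        have := S_im_le_one hw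
        linarith
      rw [h3] at hU'
      exact lt_irrefl c hU'

lemma sep_axis {x : ℝ} (hx : ¬ ∃ m : ℤ, x = (m : ℝ)) {C : Set ℂ}
    (hC : IsConnected C) (hCS : C ⊆ Sspace) {u v : ℂ} (huC : u ∈ C) (hvC : v ∈ C)
    (hu : u.re < x) (hv : x < v.re) : (⟨x, 0⟩ : ℂ) ∈ C := by
  apply connected_mem_of_sep (z := (⟨x, 0⟩ : ℂ)) (a₀ := u) (b₀ := v) hC hCS huC hvC
    (U := {w : ℂ | w.re < x}) (V := {w : ℂ | x < w.re})
  · exact isOpen_lt Complex.continuous_re continuous_const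
  · exact isOpen_lt continuous_const Complex.continuous_re
  · exact hu
  · exact hv
  · intro w hw hwz
    rcases lt_trichotomy w.re x with h1 | h1 | h1
    · exact Or.inl h1
    · by_cases h2 : w.im = 0
      · exact absurd (Complex.ext h1 h2) hwz
      · have h3 : 0 < w.im := lt_of_le_of_ne (S_im_nonneg hw) (Ne.symm h2)
        exact absurd (h1 ▸ S_branch hw h3) hx
    · exact Or.inr h1
  · intro w hw hU hV
    have h1 : w.re < x := hU
    have h2 : x < w.re := hV
    exact absurd h2 (not_lt.mpr (le_of_lt h1))


/-! ### Case B : the endpoints have distinct real parts, `a.re < b.re` -/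

def caseB (a b : ℂ) : ArcData where
  L := a.im + (b.re - a.re) + b.im
  gam := fun t => ⟨min b.re (max a.re (a.re + (t - a.im))),
                   max (a.im - t) (max 0 (t - (a.im + (b.re - a.re))))⟩
  rho := fun w =>
    a.im + (min b.re (max a.re w.re) - a.re) + bump b.re b.im w - bump a.re a.im w

theorem caseB_good {a b : ℂ} (ha : a ∈ Sspace) (hb : b ∈ Sspace) (hlt : a.re < b.re) :
    ArcGood a b (caseB a b) := by
  have h0a : 0 ≤ a.im := S_im_nonneg ha
  have h0b : 0 ≤ b.im := S_im_nonneg hb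
  have ha1 : a.im ≤ 1 := S_im_le_one ha
  have hb1 : b.im ≤ 1 := S_im_le_one hb
  have hma : 0 < a.im → ∃ m : ℤ, a.re = (m : ℝ) := fun h => S_branch ha h
  have hmb : 0 < b.im → ∃ m : ℤ, b.re = (m : ℝ) := fun h => S_branch hb h
  have hL : (0:ℝ) < a.im + (b.re - a.re) + b.im := by linarith
  have hzb : ∀ w ∈ Sspace, w.re ≠ b.re → bump b.re b.im w = 0 :=
    fun w hw hne => bump_zero hw h0b hmb hne
  have hza : ∀ w ∈ Sspace, w.re ≠ a.re → bump a.re a.im w = 0 :=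
    fun w hw hne => bump_zero hw h0a hma hne
  have hbump0 : ∀ (c H : ℝ), 0 ≤ H → ∀ w : ℂ, w.im = 0 → bump c H w = 0 := by
    intro c H hH w hwim
    refine le_antisymm (le_trans bump_le_im (le_of_eq hwim)) (bump_nonneg (le_of_eq hwim.symm) hH)
  -- evaluation of gam in the three regimes
  have hg1 : ∀ t : ℝ, t ≤ a.im → (caseB a b).gam t = ⟨a.re, a.im - t⟩ := by
    intro t htle
    refine Complex.ext ?_ ?_
    · show min b.re (max a.re (a.re + (t - a.im))) = a.re
      rw [max_eq_left (by linarith), min_eq_right hlt.le]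
    · show max (a.im - t) (max 0 (t - (a.im + (b.re - a.re)))) = a.im - t
      rw [show max (0:ℝ) (t - (a.im + (b.re - a.re))) = 0 from max_eq_left (by linarith),
        max_eq_left (by linarith)]
  have hg2 : ∀ t : ℝ, a.im ≤ t → t ≤ a.im + (b.re - a.re) →
      (caseB a b).gam t = ⟨a.re + (t - a.im), 0⟩ := by
    intro t h1 h2
    refine Complex.ext ?_ ?_
    · show min b.re (max a.re (a.re + (t - a.im))) = a.re + (t - a.im)
      rw [max_eq_right (by linarith), min_eq_right (by linarith)]
    · show max (a.im - t) (max 0 (t - (a.im + (b.re - a.re)))) = 0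
      rw [show max (0:ℝ) (t - (a.im + (b.re - a.re))) = 0 from max_eq_left (by linarith),
        max_eq_right (by linarith)]
  have hg3 : ∀ t : ℝ, a.im + (b.re - a.re) ≤ t →
      (caseB a b).gam t = ⟨b.re, t - (a.im + (b.re - a.re))⟩ := by
    intro t h1
    refine Complex.ext ?_ ?_
    · show min b.re (max a.re (a.re + (t - a.im))) = b.re
      rw [max_eq_right (by linarith), min_eq_left (by linarith)]
    · show max (a.im - t) (max 0 (t - (a.im + (b.re - a.re)))) = t - (a.im + (b.re - a.re))
      rw [show max (0:ℝ) (t - (a.im + (b.re - a.re))) = t - (a.im + (b.re - a.re)) from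
        max_eq_right (by linarith), max_eq_right (by linarith)]
  -- membership of the arc in S
  have hmemB : ∀ t ∈ Icc (0:ℝ) (caseB a b).L, (caseB a b).gam t ∈ Sspace := by
    intro t ht
    have ht0 : 0 ≤ t := ht.1
    have htL : t ≤ a.im + (b.re - a.re) + b.im := ht.2
    rcases le_or_gt t a.im with h1 | h1
    · rw [hg1 t h1]
      rcases eq_or_lt_of_le (show t ≤ a.im from h1) with he | hlt'
      · exact mem_S_iff.mpr (Or.inl (by show a.im - t = 0; rw [he]; ring))
      · exact mem_S_pt (hma (lt_of_le_of_lt ht.1 hlt')) (by linarith) (by linarith)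
    · rcases le_or_gt t (a.im + (b.re - a.re)) with h2 | h2
      · rw [hg2 t h1.le h2]
        exact mem_S_iff.mpr (Or.inl rfl)
      · rw [hg3 t h2.le]
        have hbpos : 0 < b.im := by
          by_contra hc
          push_neg at hc
          linarith
        exact mem_S_pt (hmb hbpos) (by linarith) (by linarith)
  -- the section property
  have hsecB : ∀ t ∈ Icc (0:ℝ) (caseB a b).L, (caseB a b).rho ((caseB a b).gam t) = t := by
    intro t ht
    have hwS := hmemB t ht
    have ht0 : 0 ≤ t := ht.1
    have htL : t ≤ a.im + (b.re - a.re) + b.im := ht.2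
    rcases le_or_gt t a.im with h1 | h1
    · rw [hg1 t h1] at hwS ⊢
      show a.im + (min b.re (max a.re a.re) - a.re) + bump b.re b.im _ - bump a.re a.im _ = t
      have e1 : bump b.re b.im (⟨a.re, a.im - t⟩ : ℂ) = 0 := hzb _ hwS (ne_of_lt hlt)
      have e2 : bump a.re a.im (⟨a.re, a.im - t⟩ : ℂ) = a.im - t := by
        rw [bump_branch (show (⟨a.re, a.im - t⟩ : ℂ).re = a.re from rfl)]
        exact min_eq_left (by show a.im - t ≤ a.im; linarith [ht.1])
      rw [e1, e2, max_self, min_eq_right hlt.le]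
      ring
    · rcases le_or_gt t (a.im + (b.re - a.re)) with h2 | h2
      · rw [hg2 t h1.le h2] at hwS ⊢
        show a.im + (min b.re (max a.re (a.re + (t - a.im))) - a.re) + bump b.re b.im _
          - bump a.re a.im _ = t
        have e1 : bump b.re b.im (⟨a.re + (t - a.im), 0⟩ : ℂ) = 0 := hbump0 _ _ h0b _ rfl
        have e2 : bump a.re a.im (⟨a.re + (t - a.im), 0⟩ : ℂ) = 0 := hbump0 _ _ h0a _ rfl
        rw [e1, e2, max_eq_right (by linarith), min_eq_right (by linarith)]
        ring
      · rw [hg3 t h2.le] at hwS ⊢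
        show a.im + (min b.re (max a.re b.re) - a.re) + bump b.re b.im _
          - bump a.re a.im _ = t
        have e1 : bump b.re b.im (⟨b.re, t - (a.im + (b.re - a.re))⟩ : ℂ)
            = t - (a.im + (b.re - a.re)) := by
          rw [bump_branch (show (⟨b.re, t - (a.im + (b.re - a.re))⟩ : ℂ).re = b.re from rfl)]
          exact min_eq_left (by show t - (a.im + (b.re - a.re)) ≤ b.im; linarith)
        have e2 : bump a.re a.im (⟨b.re, t - (a.im + (b.re - a.re))⟩ : ℂ) = 0 :=
          hza _ hwS (show b.re ≠ a.re from ne_of_gt hlt)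
        rw [e1, e2, max_eq_right hlt.le, min_self]
        ring
  -- image characterizations
  have himgax : ∀ w : ℂ, w.im = 0 → a.re ≤ w.re → w.re ≤ b.re →
      w ∈ (caseB a b).gam '' Icc (0:ℝ) (caseB a b).L := by
    intro w h1 h2 h3
    refine ⟨a.im + (w.re - a.re), ⟨by linarith, ?_⟩, ?_⟩
    · show a.im + (w.re - a.re) ≤ a.im + (b.re - a.re) + b.im
      linarith
    · rw [hg2 _ (by linarith) (by linarith)]
      exact Complex.ext (by show a.re + (a.im + (w.re - a.re) - a.im) = w.re; ring) h1.symm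
  have himgA : ∀ w : ℂ, w.re = a.re → 0 ≤ w.im → w.im ≤ a.im →
      w ∈ (caseB a b).gam '' Icc (0:ℝ) (caseB a b).L := by
    intro w h1 h2 h3
    refine ⟨a.im - w.im, ⟨by linarith, ?_⟩, ?_⟩
    · show a.im - w.im ≤ a.im + (b.re - a.re) + b.im
      linarith
    · rw [hg1 _ (by linarith)]
      exact Complex.ext h1.symm (by show a.im - (a.im - w.im) = w.im; ring)
  have himgB : ∀ w : ℂ, w.re = b.re → 0 ≤ w.im → w.im ≤ b.im →
      w ∈ (caseB a b).gam '' Icc (0:ℝ) (caseB a b).L := by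
    intro w h1 h2 h3
    refine ⟨a.im + (b.re - a.re) + w.im, ⟨by linarith, ?_⟩, ?_⟩
    · show a.im + (b.re - a.re) + w.im ≤ a.im + (b.re - a.re) + b.im
      linarith
    · rw [hg3 _ (by linarith)]
      exact Complex.ext h1.symm
        (by show a.im + (b.re - a.re) + w.im - (a.im + (b.re - a.re)) = w.im; ring)
  -- constant values of rho on the components of the complement
  have pL : ∀ w ∈ Sspace, w.re < a.re → (caseB a b).rho w = a.im := by
    intro w hw h1
    show a.im + (min b.re (max a.re w.re) - a.re) + bump b.re b.im w - bump a.re a.im w = a.im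
    rw [hzb w hw (by linarith : w.re ≠ b.re), hza w hw (ne_of_lt h1),
      max_eq_left h1.le, min_eq_right hlt.le]
    ring
  have pR : ∀ w ∈ Sspace, b.re < w.re → (caseB a b).rho w = a.im + (b.re - a.re) := by
    intro w hw h1
    show a.im + (min b.re (max a.re w.re) - a.re) + bump b.re b.im w - bump a.re a.im w
      = a.im + (b.re - a.re)
    rw [hzb w hw (ne_of_gt h1), hza w hw (by linarith : w.re ≠ a.re),
      max_eq_right (by linarith), min_eq_left h1.le]
    ring
  have pM : ∀ (c : ℝ), a.re < c → c < b.re → ∀ w ∈ Sspace, w.re = c →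
      (caseB a b).rho w = a.im + (c - a.re) := by
    intro c hc1 hc2 w hw h1
    show a.im + (min b.re (max a.re w.re) - a.re) + bump b.re b.im w - bump a.re a.im w
      = a.im + (c - a.re)
    rw [hzb w hw (by rw [h1]; exact ne_of_lt hc2), hza w hw (by rw [h1]; exact ne_of_gt hc1),
      h1, max_eq_right hc1.le, min_eq_right hc2.le]
    ring
  have pA : ∀ w ∈ Sspace, w.re = a.re → a.im ≤ w.im → (caseB a b).rho w = 0 := by
    intro w hw h1 h2
    show a.im + (min b.re (max a.re w.re) - a.re) + bump b.re b.im w - bump a.re a.im w = 0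
    rw [hzb w hw (by rw [h1]; exact ne_of_lt hlt), bump_branch h1, min_eq_right h2,
      h1, max_self, min_eq_right hlt.le]
    ring
  have pB : ∀ w ∈ Sspace, w.re = b.re → b.im ≤ w.im →
      (caseB a b).rho w = a.im + (b.re - a.re) + b.im := by
    intro w hw h1 h2
    show a.im + (min b.re (max a.re w.re) - a.re) + bump b.re b.im w - bump a.re a.im w
      = a.im + (b.re - a.re) + b.im
    rw [hza w hw (by rw [h1]; exact ne_of_gt hlt), bump_branch h1, min_eq_right h2,
      h1, max_eq_right hlt.le, min_self]
    ring
  refine ⟨hL, ?_, ?_, ?_, ?_, hmemB, ?_, hsecB, ?_, ?_⟩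
  · rw [hg1 0 h0a]
    exact Complex.ext rfl (sub_zero a.im)
  · show (caseB a b).gam (a.im + (b.re - a.re) + b.im) = b
    rw [hg3 _ (by linarith)]
    exact Complex.ext rfl (by show a.im + (b.re - a.re) + b.im - (a.im + (b.re - a.re)) = b.im; ring)
  · show Continuous fun t : ℝ => (⟨min b.re (max a.re (a.re + (t - a.im))),
      max (a.im - t) (max 0 (t - (a.im + (b.re - a.re))))⟩ : ℂ)
    simp only [Complex.mk_eq_add_mul_I]
    fun_prop
  · show Continuous fun w : ℂ =>
      a.im + (min b.re (max a.re w.re) - a.re) + bump b.re b.im w - bump a.re a.im w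
    exact (((continuous_const.add (((continuous_const.min
      (continuous_const.max Complex.continuous_re))).sub continuous_const)).add
      (bump_continuous b.re b.im)).sub (bump_continuous a.re a.im))
  · -- range of rho
    intro w hw
    have e1 : 0 ≤ bump a.re a.im w := bump_nonneg (S_im_nonneg hw) h0a
    have e2 : bump a.re a.im w ≤ a.im := bump_le_H
    have e3 : 0 ≤ bump b.re b.im w := bump_nonneg (S_im_nonneg hw) h0b
    have e4 : bump b.re b.im w ≤ b.im := bump_le_H
    have e5 : a.re ≤ min b.re (max a.re w.re) := le_min hlt.le (le_max_left _ _)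
    have e6 : min b.re (max a.re w.re) ≤ b.re := min_le_left _ _
    constructor
    · show 0 ≤ a.im + (min b.re (max a.re w.re) - a.re) + bump b.re b.im w - bump a.re a.im w
      linarith
    · show a.im + (min b.re (max a.re w.re) - a.re) + bump b.re b.im w - bump a.re a.im w
        ≤ a.im + (b.re - a.re) + b.im
      linarith
  · -- plateau
    intro w hw hnimg
    rcases eq_or_lt_of_le (S_im_nonneg hw) with him0 | himpos
    · -- on the real axis
      have hout : w.re < a.re ∨ b.re < w.re := by
        by_contra hc
        push_neg at hc
        exact hnimg (himgax w him0.symm hc.1 hc.2)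
      rcases hout with h1 | h1
      · refine ⟨a.re - w.re, by linarith, ?_⟩
        intro w' hw' hd
        have hdr := abs_re_le_dist w' w
        have h2 : w'.re < a.re := by
          have := (abs_lt.mp (lt_of_le_of_lt hdr hd)).2
          linarith
        rw [pL w' hw' h2, pL w hw h1]
      · refine ⟨w.re - b.re, by linarith, ?_⟩
        intro w' hw' hd
        have hdr := abs_re_le_dist w' w
        have h2 : b.re < w'.re := by
          have := (abs_lt.mp (lt_of_le_of_lt hdr hd)).1
          linarith
        rw [pR w' hw' h2, pR w hw h1]
    · -- on a branch
      have hmw : ∃ m : ℤ, w.re = (m : ℝ) := S_branch hw himpos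
      rcases lt_trichotomy w.re a.re with h1 | h1 | h1
      · refine ⟨a.re - w.re, by linarith, ?_⟩
        intro w' hw' hd
        have hdr := abs_re_le_dist w' w
        have h2 : w'.re < a.re := by
          have := (abs_lt.mp (lt_of_le_of_lt hdr hd)).2
          linarith
        rw [pL w' hw' h2, pL w hw h1]
      · -- on the branch over a.re
        have h2 : a.im < w.im := by
          by_contra hc
          push_neg at hc
          exact hnimg (himgA w h1 (le_of_lt himpos) hc)
        refine ⟨min (w.im - a.im) 1, lt_min (by linarith) one_pos, ?_⟩
        intro w' hw' hd
        have hdi := abs_im_le_dist w' w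
        have hdr := abs_re_le_dist w' w
        have h3 : a.im < w'.im := by
          have := (abs_lt.mp (lt_of_le_of_lt hdi (lt_of_lt_of_le hd (min_le_left _ _)))).1
          linarith
        have h4 : w'.re = a.re := by
          rw [← h1]
          apply re_eq_of_branches (S_branch hw' (by linarith)) hmw
          have := (abs_lt.mp (lt_of_le_of_lt hdr (lt_of_lt_of_le hd (min_le_right _ _))))
          rw [abs_lt]
          constructor <;> [linarith [this.1]; linarith [this.2]]
        rw [pA w' hw' h4 h3.le, pA w hw h1 h2.le]
      · rcases lt_trichotomy w.re b.re with h2 | h2 | h2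
        · -- on an intermediate branch
          refine ⟨min w.im 1, lt_min himpos one_pos, ?_⟩
          intro w' hw' hd
          have hdi := abs_im_le_dist w' w
          have hdr := abs_re_le_dist w' w
          have h3 : 0 < w'.im := by
            have := (abs_lt.mp (lt_of_le_of_lt hdi (lt_of_lt_of_le hd (min_le_left _ _)))).1
            linarith
          have h4 : w'.re = w.re := by
            apply re_eq_of_branches (S_branch hw' h3) hmw
            have := (abs_lt.mp (lt_of_le_of_lt hdr (lt_of_lt_of_le hd (min_le_right _ _))))
            rw [abs_lt]
            constructor <;> [linarith [this.1]; linarith [this.2]]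
          rw [pM w.re h1 h2 w' hw' h4, pM w.re h1 h2 w hw rfl]
        · -- on the branch over b.re
          have h3 : b.im < w.im := by
            by_contra hc
            push_neg at hc
            exact hnimg (himgB w h2 (le_of_lt himpos) hc)
          refine ⟨min (w.im - b.im) 1, lt_min (by linarith) one_pos, ?_⟩
          intro w' hw' hd
          have hdi := abs_im_le_dist w' w
          have hdr := abs_re_le_dist w' w
          have h4 : b.im < w'.im := by
            have := (abs_lt.mp (lt_of_le_of_lt hdi (lt_of_lt_of_le hd (min_le_left _ _)))).1
            linarith
          have h5 : w'.re = b.re := by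
            rw [← h2]
            apply re_eq_of_branches (S_branch hw' (by linarith)) hmw
            have := (abs_lt.mp (lt_of_le_of_lt hdr (lt_of_lt_of_le hd (min_le_right _ _))))
            rw [abs_lt]
            constructor <;> [linarith [this.1]; linarith [this.2]]
          rw [pB w' hw' h5 h4.le, pB w hw h2 h3.le]
        · refine ⟨w.re - b.re, by linarith, ?_⟩
          intro w' hw' hd
          have hdr := abs_re_le_dist w' w
          have h3 : b.re < w'.re := by
            have := (abs_lt.mp (lt_of_le_of_lt hdr hd)).1
            linarith
          rw [pR w' hw' h3, pR w hw h2]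
  · -- minimality
    intro C haC hbC hCS hCcl hCco
    rintro _ ⟨t, ht, rfl⟩
    have hCco' : IsConnected C := hCco
    have ht0 : 0 ≤ t := ht.1
    have htL : t ≤ a.im + (b.re - a.re) + b.im := ht.2
    rcases eq_or_lt_of_le ht.1 with h0 | h0
    · rw [← h0, hg1 0 h0a]
      have : (⟨a.re, a.im - 0⟩ : ℂ) = a := Complex.ext rfl (sub_zero a.im)
      rw [this]; exact haC
    rcases eq_or_lt_of_le (show t ≤ a.im + (b.re - a.re) + b.im from ht.2) with hLe | hLe
    · rw [hLe, hg3 _ (by linarith)]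
      have : (⟨b.re, a.im + (b.re - a.re) + b.im - (a.im + (b.re - a.re))⟩ : ℂ) = b :=
        Complex.ext rfl (by show _ = b.im; ring)
      rw [this]; exact hbC
    rcases lt_trichotomy t a.im with h1 | h1 | h1
    · -- interior of the branch over a.re
      rw [hg1 t h1.le]
      have hapos : 0 < a.im := lt_of_le_of_lt (le_of_lt h0) h1
      exact sep_vert (hma hapos) (by linarith : 0 < a.im - t) hCco hCS hbC haC
        (Or.inl (ne_of_gt hlt)) ⟨rfl, by linarith⟩
    · -- the corner point (a.re, 0)
      rw [hg1 t h1.le]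
      have hapos : 0 < a.im := h1 ▸ h0
      have : (⟨a.re, a.im - t⟩ : ℂ) = ⟨a.re, 0⟩ := Complex.ext rfl (by rw [← h1]; ring)
      rw [this]
      exact sep_horiz (hma hapos) hCco hCS haC hbC (Or.inr ⟨rfl, hapos⟩) hlt
    rcases lt_trichotomy t (a.im + (b.re - a.re)) with h2 | h2 | h2
    · -- interior of the axis part
      rw [hg2 t h1.le h2.le]
      by_cases hx : ∃ m : ℤ, a.re + (t - a.im) = (m : ℝ)
      · exact sep_horiz hx hCco hCS haC hbC (Or.inl (by linarith)) (by linarith)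
      · exact sep_axis hx hCco hCS haC hbC (by linarith) (by linarith)
    · -- the corner point (b.re, 0)
      rw [hg3 t h2.ge]
      have hbpos : 0 < b.im := by
        by_contra hc
        push_neg at hc
        have : a.im + (b.re - a.re) + b.im ≤ t := by linarith
        linarith
      have : (⟨b.re, t - (a.im + (b.re - a.re))⟩ : ℂ) = ⟨b.re, 0⟩ :=
        Complex.ext rfl (by rw [h2]; ring)
      rw [this]
      exact sep_horiz' (hmb hbpos) hCco hCS haC hbC (by linarith) (Or.inr ⟨rfl, hbpos⟩)
    · -- interior of the branch over b.re
      rw [hg3 t h2.le]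
      have hbpos : 0 < b.im := by
        by_contra hc
        push_neg at hc
        linarith
      exact sep_vert (hmb hbpos) (by linarith : 0 < t - (a.im + (b.re - a.re))) hCco hCS haC hbC
        (Or.inl (ne_of_lt hlt)) ⟨rfl, by linarith⟩


/-! ### Symmetry and reflection transports -/

def symmData (D : ArcData) : ArcData where
  L := D.L
  gam := fun t => D.gam (D.L - t)
  rho := fun w => D.L - D.rho w

theorem symm_good {a b : ℂ} {D : ArcData} (h : ArcGood b a D) : ArcGood a b (symmData D) := by
  have hLpos := h.hL
  have himg : (symmData D).gam '' Icc (0:ℝ) (symmData D).L = D.gam '' Icc (0:ℝ) D.L := by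
    apply le_antisymm
    · rintro _ ⟨t, ht, rfl⟩
      have ht1 : (0:ℝ) ≤ t := ht.1
      have ht2 : t ≤ D.L := ht.2
      exact ⟨D.L - t, ⟨by linarith, by linarith⟩, rfl⟩
    · rintro _ ⟨t, ht, rfl⟩
      have ht1 : (0:ℝ) ≤ t := ht.1
      have ht2 : t ≤ D.L := ht.2
      refine ⟨D.L - t, ⟨?_, ?_⟩, ?_⟩
      · show (0:ℝ) ≤ D.L - t
        linarith
      · show D.L - t ≤ D.L
        linarith
      · show D.gam (D.L - (D.L - t)) = D.gam t
        rw [sub_sub_cancel]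
  refine ⟨h.hL, ?_, ?_, ?_, ?_, ?_, ?_, ?_, ?_, ?_⟩
  · show D.gam (D.L - 0) = a
    rw [sub_zero]; exact h.hgamL
  · show D.gam (D.L - D.L) = b
    rw [sub_self]; exact h.hgam0
  · exact h.hgamc.comp (continuous_const.sub continuous_id)
  · exact continuous_const.sub h.hrhoc
  · intro t ht
    have ht1 : (0:ℝ) ≤ t := ht.1
    have ht2 : t ≤ D.L := ht.2
    exact h.hmem (D.L - t) ⟨by linarith, by linarith⟩
  · intro w hw
    have h1 : (0:ℝ) ≤ D.rho w := (h.hrmem w hw).1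
    have h2 : D.rho w ≤ D.L := (h.hrmem w hw).2
    constructor
    · show (0:ℝ) ≤ D.L - D.rho w
      linarith
    · show D.L - D.rho w ≤ D.L
      linarith
  · intro t ht
    have ht1 : (0:ℝ) ≤ t := ht.1
    have ht2 : t ≤ D.L := ht.2
    show D.L - D.rho (D.gam (D.L - t)) = t
    rw [h.hsec (D.L - t) ⟨by linarith, by linarith⟩]
    ring
  · intro w hw hnimg
    rw [himg] at hnimg
    obtain ⟨ε, hε, hconst⟩ := h.hplat w hw hnimg
    refine ⟨ε, hε, fun w' hw' hd => ?_⟩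
    show D.L - D.rho w' = D.L - D.rho w
    rw [hconst w' hw' hd]
  · intro C haC hbC hCS hCcl hCco
    rw [himg]
    exact h.hmin C hbC haC hCS hCcl hCco

/-- reflection of the plane preserving `S`. -/
def Rmap (z : ℂ) : ℂ := ⟨-z.re, z.im⟩

lemma Rmap_invol (z : ℂ) : Rmap (Rmap z) = z := Complex.ext (neg_neg z.re) rfl

lemma Rmap_cont : Continuous Rmap := by
  show Continuous fun z : ℂ => (⟨-z.re, z.im⟩ : ℂ)
  simp only [Complex.mk_eq_add_mul_I]
  fun_prop

lemma Rmap_mem_S {z : ℂ} (hz : z ∈ Sspace) : Rmap z ∈ Sspace := by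
  rcases mem_S_iff.mp hz with h | h
  · exact mem_S_iff.mpr (Or.inl h)
  · refine mem_S_iff.mpr (Or.inr ⟨?_, h.2⟩)
    obtain ⟨m, hm⟩ := h.1
    exact ⟨-m, by show -z.re = _; rw [hm]; push_cast; ring⟩

lemma Rmap_eq (z : ℂ) : Rmap z = -(starRingEnd ℂ z) := by
  refine Complex.ext ?_ ?_ <;> simp [Rmap]

lemma Rmap_dist (z w : ℂ) : dist (Rmap z) (Rmap w) = dist z w := by
  rw [Rmap_eq, Rmap_eq, dist_neg_neg, Complex.dist_conj_conj]

def reflData (D : ArcData) : ArcData where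
  L := D.L
  gam := fun t => Rmap (D.gam t)
  rho := fun w => D.rho (Rmap w)

theorem refl_good {a b : ℂ} {D : ArcData} (h : ArcGood (Rmap a) (Rmap b) D) :
    ArcGood a b (reflData D) := by
  have himg : ∀ w : ℂ, w ∈ (reflData D).gam '' Icc (0:ℝ) (reflData D).L ↔
      Rmap w ∈ D.gam '' Icc (0:ℝ) D.L := by
    intro w
    constructor
    · rintro ⟨t, ht, rfl⟩
      show Rmap (Rmap (D.gam t)) ∈ _
      rw [Rmap_invol]
      exact ⟨t, ht, rfl⟩
    · rintro ⟨t, ht, hw⟩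
      refine ⟨t, ht, ?_⟩
      show Rmap (D.gam t) = w
      rw [hw, Rmap_invol]
  refine ⟨h.hL, ?_, ?_, ?_, ?_, ?_, ?_, ?_, ?_, ?_⟩
  · show Rmap (D.gam 0) = a
    rw [h.hgam0, Rmap_invol]
  · show Rmap (D.gam D.L) = b
    rw [h.hgamL, Rmap_invol]
  · exact Rmap_cont.comp h.hgamc
  · exact h.hrhoc.comp Rmap_cont
  · intro t ht
    exact Rmap_mem_S (h.hmem t ht)
  · intro w hw
    exact h.hrmem (Rmap w) (Rmap_mem_S hw)
  · intro t ht
    show D.rho (Rmap (Rmap (D.gam t))) = t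
    rw [Rmap_invol]
    exact h.hsec t ht
  · intro w hw hnimg
    have hnimg' : Rmap w ∉ D.gam '' Icc (0:ℝ) D.L := fun hc => hnimg ((himg w).mpr hc)
    obtain ⟨ε, hε, hconst⟩ := h.hplat (Rmap w) (Rmap_mem_S hw) hnimg'
    refine ⟨ε, hε, fun w' hw' hd => ?_⟩
    show D.rho (Rmap w') = D.rho (Rmap w)
    exact hconst (Rmap w') (Rmap_mem_S hw') (by rw [Rmap_dist]; exact hd)
  · intro C haC hbC hCS hCcl hCco
    have hC' : D.gam '' Icc (0:ℝ) D.L ⊆ Rmap ⁻¹' C := by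
      have hpre_eq : Rmap ⁻¹' C = Rmap '' C := by
        ext z
        constructor
        · intro hz
          exact ⟨Rmap z, hz, Rmap_invol z⟩
        · rintro ⟨w, hw, rfl⟩
          show Rmap (Rmap w) ∈ C
          rw [Rmap_invol]; exact hw
      apply h.hmin
      · show Rmap (Rmap a) ∈ C
        rw [Rmap_invol]; exact haC
      · show Rmap (Rmap b) ∈ C
        rw [Rmap_invol]; exact hbC
      · intro z hz
        have : Rmap z ∈ Sspace := hCS hz
        have := Rmap_mem_S this
        rwa [Rmap_invol] at this
      · exact IsClosed.preimage Rmap_cont hCcl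
      · rw [hpre_eq]
        exact hCco.image Rmap Rmap_cont.continuousOn
    rintro _ ⟨t, ht, rfl⟩
    exact hC' ⟨t, ht, rfl⟩

/-! ### The arc between two arbitrary points of `S` -/

def mkArc (a b : ℂ) : ArcData :=
  if a.re = b.re then
    (if a.im ≤ b.im then caseA a b else symmData (caseA b a))
  else
    (if a.re < b.re then caseB a b else reflData (caseB (Rmap a) (Rmap b)))

theorem mkArc_good {a b : ℂ} (ha : a ∈ Sspace) (hb : b ∈ Sspace) (hne : a ≠ b) :
    ArcGood a b (mkArc a b) := by
  unfold mkArc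
  split_ifs with h1 h2 h3
  · have : a.im < b.im := by
      rcases eq_or_lt_of_le h2 with h | h
      · exact absurd (Complex.ext h1 h) hne
      · exact h
    exact caseA_good ha hb h1 this
  · exact symm_good (caseA_good hb ha h1.symm (by linarith [not_le.mp h2]))
  · exact caseB_good ha hb h3
  · have h4 : b.re < a.re := lt_of_le_of_ne (not_lt.mp h3) (Ne.symm h1)
    apply refl_good
    exact caseB_good (Rmap_mem_S ha) (Rmap_mem_S hb) (by show -a.re < -b.re; linarith)


/-! ### Degree one maps -/

lemma S_add_int {z : ℂ} (hz : z ∈ Sspace) (c : ℤ) : z + (c : ℂ) ∈ Sspace := by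
  rcases mem_S_iff.mp hz with h | h
  · refine mem_S_iff.mpr (Or.inl ?_)
    simp [Complex.add_im, Complex.intCast_im, h]
  · refine mem_S_iff.mpr (Or.inr ⟨?_, ?_, ?_⟩)
    · obtain ⟨m, hm⟩ := h.1
      exact ⟨m + c, by simp [Complex.add_re, Complex.intCast_re, hm]⟩
    · simp [Complex.add_im, Complex.intCast_im, h.2.1]
    · simp [Complex.add_im, Complex.intCast_im, h.2.2]

lemma deg1_add_int {F : ℂ → ℂ} (hF : DegMap 1 F) {z : ℂ} (hz : z ∈ Sspace) (c : ℤ) :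
    F (z + (c : ℂ)) = F z + (c : ℂ) := by
  have hone : ∀ w ∈ Sspace, F (w + 1) = F w + 1 := by
    intro w hw
    have := hF.2.2 w hw
    simpa using this
  induction c using Int.induction_on with
  | zero => simp
  | succ m ih =>
    have h1 : z + ((m : ℤ) + 1 : ℤ) = (z + (m : ℤ)) + 1 := by push_cast; ring
    rw [h1, hone _ (S_add_int hz m), ih]
    push_cast; ring
  | pred m ih =>
    have hzm : z + ((-(m : ℤ) - 1 : ℤ) : ℂ) ∈ Sspace := S_add_int hz _
    have h1 := hone _ hzm
    have h2 : z + ((-(m : ℤ) - 1 : ℤ) : ℂ) + 1 = z + ((-(m : ℤ) : ℤ) : ℂ) := by push_cast; ring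
    rw [h2] at h1
    rw [ih] at h1
    have h3 : F (z + ((-(m : ℤ) - 1 : ℤ) : ℂ)) = F z + ((-(m : ℤ) : ℤ) : ℂ) - 1 := by
      linear_combination -h1
    rw [h3]
    push_cast; ring

lemma iter_mapsTo {F : ℂ → ℂ} (hF : DegMap 1 F) (m : ℕ) : MapsTo F^[m] Sspace Sspace :=
  hF.1.iterate m

lemma iter_contOn {F : ℂ → ℂ} (hF : DegMap 1 F) (m : ℕ) : ContinuousOn F^[m] Sspace := by
  induction m with
  | zero => simpa using continuousOn_id
  | succ m ih =>
    rw [Function.iterate_succ']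
    exact hF.2.1.comp ih (iter_mapsTo hF m)

lemma iter_add_int {F : ℂ → ℂ} (hF : DegMap 1 F) {z : ℂ} (hz : z ∈ Sspace) (m : ℕ) (c : ℤ) :
    F^[m] (z + (c : ℂ)) = F^[m] z + (c : ℂ) := by
  induction m with
  | zero => simp
  | succ m ih =>
    rw [Function.iterate_succ_apply', Function.iterate_succ_apply', ih,
      deg1_add_int hF (iter_mapsTo hF m hz) c]

/-! ### The chain of retracted compositions -/

def chain (g : ℕ → ℝ → ℂ) (r : ℕ → ℂ → ℝ) (G : ℕ → ℂ → ℂ) : ℕ → ℝ → ℂ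
  | 0 => g 0
  | (i+1) => fun t => g (i+1) (r (i+1) (G i (chain g r G i t)))

lemma chain_zero (g : ℕ → ℝ → ℂ) (r : ℕ → ℂ → ℝ) (G : ℕ → ℂ → ℂ) (t : ℝ) :
    chain g r G 0 t = g 0 t := rfl

lemma chain_succ (g : ℕ → ℝ → ℂ) (r : ℕ → ℂ → ℝ) (G : ℕ → ℂ → ℂ) (i : ℕ) (t : ℝ) :
    chain g r G (i+1) t = g (i+1) (r (i+1) (G i (chain g r G i t))) := rfl

/-! ### Real interval lemmas -/

lemma two_ivt_inc {φ : ℝ → ℝ} {u v A B s u' : ℝ} (huv : u ≤ v)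
    (hφ : ContinuousOn φ (Icc u v)) (hfu : φ u = A) (hfv : φ v = B)
    (hA : A ≤ s) (hsu : s ≤ u') (hu'B : u' ≤ B) :
    ∃ x y, x ∈ Icc u v ∧ y ∈ Icc u v ∧ x ≤ y ∧ φ x = s ∧ φ y = u' := by
  obtain ⟨y, hy, hφy⟩ := intermediate_value_Icc huv hφ
    (show u' ∈ Icc (φ u) (φ v) by rw [hfu, hfv]; exact ⟨le_trans hA hsu, hu'B⟩)
  obtain ⟨x, hx, hφx⟩ := intermediate_value_Icc hy.1 (hφ.mono (Icc_subset_Icc le_rfl hy.2))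
    (show s ∈ Icc (φ u) (φ y) by rw [hfu, hφy]; exact ⟨hA, hsu⟩)
  exact ⟨x, y, ⟨hx.1, le_trans hx.2 hy.2⟩, hy, hx.2, hφx, hφy⟩

lemma two_ivt_dec {φ : ℝ → ℝ} {u v A B s u' : ℝ} (huv : u ≤ v)
    (hφ : ContinuousOn φ (Icc u v)) (hfu : φ u = A) (hfv : φ v = B)
    (hB : B ≤ s) (hsu : s ≤ u') (hu'A : u' ≤ A) :
    ∃ x y, x ∈ Icc u v ∧ y ∈ Icc u v ∧ x ≤ y ∧ φ x = u' ∧ φ y = s := by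
  obtain ⟨y, hy, hφy⟩ := intermediate_value_Icc' huv hφ
    (show s ∈ Icc (φ v) (φ u) by rw [hfu, hfv]; exact ⟨hB, le_trans hsu hu'A⟩)
  obtain ⟨x, hx, hφx⟩ := intermediate_value_Icc' hy.1 (hφ.mono (Icc_subset_Icc le_rfl hy.2))
    (show u' ∈ Icc (φ y) (φ u) by rw [hfu, hφy]; exact ⟨hsu, hu'A⟩)
  exact ⟨x, y, ⟨hx.1, le_trans hx.2 hy.2⟩, hy, hx.2, hφx, hφy⟩

lemma no_plateau_fix {θ : ℝ → ℝ} {u v L : ℝ} (hu0 : 0 ≤ u) (huv : u ≤ v) (hvL : v ≤ L)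
    (hL : 0 < L) (hθc : ContinuousOn θ (Icc u v)) (hθu : θ u = 0) (hθv : θ v = L)
    (hplat : ∀ q ∈ Icc u v, θ q = q → ∃ δ > 0, ∀ t ∈ Icc u v, |t - q| < δ → θ t = θ q) :
    False := by
  have hsub : ∀ d, u ≤ d → d ≤ v → θ d < d → False := by
    intro d hud hdv hθd
    set Q : Set ℝ := {t ∈ Icc d v | θ t - t = 0} with hQdef
    have hQclosed : IsClosed Q := by
      have : Q = Icc d v ∩ (fun t => θ t - t) ⁻¹' {0} := by
        ext t; simp [hQdef]
      rw [this]
      exact ContinuousOn.preimage_isClosed_of_isClosed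
        (((hθc.mono (Icc_subset_Icc hud le_rfl)).sub continuousOn_id)) isClosed_Icc
        isClosed_singleton
    have hsubIcc : Icc d v ⊆ Icc u v := Icc_subset_Icc hud le_rfl
    have hQne : Q.Nonempty := by
      obtain ⟨q, hq, hq0⟩ := intermediate_value_Icc hdv
        ((hθc.mono hsubIcc).sub continuousOn_id)
        (show (0:ℝ) ∈ Icc (θ d - d) (θ v - v) from ⟨by linarith, by rw [hθv]; linarith⟩)
      exact ⟨q, hq, hq0⟩
    have hQbdd : BddBelow Q := ⟨d, fun t ht => ht.1.1⟩
    set q := sInf Q with hqdef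
    have hqQ : q ∈ Q := hQclosed.csInf_mem hQne hQbdd
    have hqfix : θ q = q := by linarith [hqQ.2]
    have hdq : d < q := by
      rcases eq_or_lt_of_le hqQ.1.1 with h | h
      · exfalso
        rw [← h] at hqfix
        linarith
      · exact h
    obtain ⟨δ, hδ, hδconst⟩ := hplat q (hsubIcc hqQ.1) hqfix
    set t := max d (q - δ/2) with htdef
    have htd : d ≤ t := le_max_left _ _
    have htq : t < q := max_lt hdq (by linarith)
    have htδ : |t - q| < δ := by
      rw [abs_lt]
      constructor
      · have : q - δ/2 ≤ t := le_max_right _ _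
        linarith
      · linarith
    have hθt : θ t = q := by
      rw [hδconst t (hsubIcc ⟨htd, le_trans htq.le hqQ.1.2⟩) htδ, hqfix]
    obtain ⟨q', hq', hq'0⟩ := intermediate_value_Icc htd
      ((hθc.mono (Icc_subset_Icc hud (le_trans htq.le hqQ.1.2))).sub continuousOn_id)
      (show (0:ℝ) ∈ Icc (θ d - d) (θ t - t) from ⟨by linarith, by rw [hθt]; linarith⟩)
    have : q ≤ q' := csInf_le hQbdd ⟨⟨hq'.1, le_trans hq'.2 (le_trans htq.le hqQ.1.2)⟩, hq'0⟩
    linarith [hq'.2]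
  rcases eq_or_lt_of_le (show θ u ≤ u by rw [hθu]; exact hu0) with hequ | hltu
  · -- θ u = u, so u = 0 ; use the plateau at u
    have hu_eq : u = 0 := by rw [← hequ, hθu]
    obtain ⟨δ, hδ, hδconst⟩ := hplat u (left_mem_Icc.mpr huv) hequ
    rcases le_or_gt v (u + δ/2) with hv | hv
    · have : θ v = θ u := hδconst v (right_mem_Icc.mpr huv) (by rw [abs_lt]; constructor <;> linarith)
      rw [hθv, hθu] at this
      linarith
    · have hθd : θ (u + δ/2) = θ u := hδconst (u + δ/2) ⟨by linarith, by linarith⟩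
        (by rw [abs_lt]; constructor <;> linarith)
      apply hsub (u + δ/2) (by linarith) (by linarith)
      rw [hθd, hθu]
      linarith
  · exact hsub u le_rfl huv hltu

end S13


open S13 in
/-- Positive loops of signed coverings yield periodic-like points: given a
loop of signed coverings `(I_0,<₀) → (I_1,<₁) → ⋯ → (I_0,<₀)` of positive sign, with
the `i`-th covering realized by `F^[n i] − p i`, there is `x₀ ∈ I₀` with
`F^[m_k](x₀) = x₀ + p̂_k` and `F^[m_i](x₀) ∈ I_i + p̂_i` for `1 ≤ i ≤ k−1`.
Here the oriented interval `I_i` has endpoints `a i` (min) and `b i` (max). -/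
theorem statement13 (F : ℂ → ℂ) (hF : DegMap 1 F) (k : ℕ) (hk : 0 < k)
    (a b : ℕ → ℂ) (n : ℕ → ℕ) (p : ℕ → ℤ) (ε : ℕ → Bool)
    (hS : ∀ i ≤ k, a i ∈ Sspace ∧ b i ∈ Sspace ∧ a i ≠ b i)
    (hclose : a k = a 0 ∧ b k = b 0)
    (hn : ∀ i < k, 0 < n i)
    (hcov : ∀ i < k,
      if ε i then
        PosCovers (fun z => F^[n i] z - (p i : ℂ)) (a i) (b i) (a (i + 1)) (b (i + 1))
      else
        NegCovers (fun z => F^[n i] z - (p i : ℂ)) (a i) (b i) (a (i + 1)) (b (i + 1)))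
    (hsign : (∏ i ∈ Finset.range k, (if ε i then (1 : ℤ) else -1)) = 1) :
    ∃ x₀ ∈ sHull {a 0, b 0},
      F^[∑ j ∈ Finset.range k, n j] x₀ = x₀ + ((∑ j ∈ Finset.range k, p j : ℤ) : ℂ) ∧
      ∀ i : ℕ, 0 < i → i < k →
        ∃ w ∈ sHull {a i, b i},
          F^[∑ j ∈ Finset.range i, n j] x₀ = w + ((∑ j ∈ Finset.range i, p j : ℤ) : ℂ) := by
  
  classical
  set D : ℕ → ArcData := fun i => mkArc (a i) (b i) with hDdef
  have hDk : D k = D 0 := by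
    simp only [hDdef]
    rw [hclose.1, hclose.2]
  have hAG : ∀ i, i ≤ k → ArcGood (a i) (b i) (D i) := fun i hi =>
    mkArc_good (hS i hi).1 (hS i hi).2.1 (hS i hi).2.2
  set G : ℕ → ℂ → ℂ := fun i z => F^[n i] z - ((p i : ℤ) : ℂ) with hGdef
  have hGmaps : ∀ i, MapsTo (G i) Sspace Sspace := by
    intro i z hz
    have h1 : F^[n i] z ∈ Sspace := iter_mapsTo hF (n i) hz
    have h2 := S_add_int h1 (-(p i))
    rw [Int.cast_neg, ← sub_eq_add_neg] at h2
    exact h2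
  have hGcont : ∀ i, ContinuousOn (G i) Sspace := fun i =>
    (iter_contOn hF (n i)).sub continuousOn_const
  set Z : ℕ → ℝ → ℂ := chain (fun i => (D i).gam) (fun i => (D i).rho) G with hZdef
  have hZsucc : ∀ i t, Z (i+1) t = (D (i+1)).gam ((D (i+1)).rho (G i (Z i t))) :=
    fun i t => rfl
  have hZzero : ∀ t, Z 0 t = (D 0).gam t := fun t => rfl
  have hZmem : ∀ i, i ≤ k → ∀ t ∈ Icc (0:ℝ) (D 0).L,
      Z i t ∈ (D i).gam '' Icc (0:ℝ) (D i).L := by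
    intro i
    induction i with
    | zero => exact fun _ t ht => ⟨t, ht, rfl⟩
    | succ i ih =>
      intro hik t ht
      have hik' : i ≤ k := Nat.le_of_succ_le hik
      have hZiS : Z i t ∈ Sspace := (hAG i hik').img_subset_S (ih hik' t ht)
      exact ⟨(D (i+1)).rho (G i (Z i t)), (hAG (i+1) hik).hrmem _ (hGmaps i hZiS), rfl⟩
  have hZS : ∀ i, i ≤ k → ∀ t ∈ Icc (0:ℝ) (D 0).L, Z i t ∈ Sspace :=
    fun i hi t ht => (hAG i hi).img_subset_S (hZmem i hi t ht)
  have hZcont : ∀ i, i ≤ k → ContinuousOn (Z i) (Icc (0:ℝ) (D 0).L) := by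
    intro i
    induction i with
    | zero => exact fun _ => (hAG 0 (Nat.zero_le k)).hgamc.continuousOn
    | succ i ih =>
      intro hik
      have hik' : i ≤ k := Nat.le_of_succ_le hik
      have h1 : ContinuousOn (fun t => G i (Z i t)) (Icc (0:ℝ) (D 0).L) :=
        (hGcont i).comp (ih hik') (fun t ht => hZS i hik' t ht)
      exact ((hAG (i+1) hik).hgamc.comp (hAG (i+1) hik).hrhoc).comp_continuousOn h1
  -- translate the covering hypotheses
  have hcovW : ∀ i, i < k → ∃ s u' : ℝ, s ∈ Icc (0:ℝ) (D i).L ∧ u' ∈ Icc (0:ℝ) (D i).L ∧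
      s ≤ u' ∧
      ((ε i = true ∧ (D (i+1)).rho (G i ((D i).gam s)) = 0 ∧
          (D (i+1)).rho (G i ((D i).gam u')) = (D (i+1)).L) ∨
        (ε i = false ∧ (D (i+1)).rho (G i ((D i).gam s)) = (D (i+1)).L ∧
          (D (i+1)).rho (G i ((D i).gam u')) = 0)) := by
    intro i hik
    have hAGi := hAG i hik.le
    have hAGi1 := hAG (i+1) (Nat.succ_le_of_lt hik)
    have hrho_a : (D (i+1)).rho (a (i+1)) = 0 := by
      conv_lhs => rw [← hAGi1.hgam0]
      exact hAGi1.hsec 0 ⟨le_rfl, hAGi1.hL.le⟩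
    have hrho_b : (D (i+1)).rho (b (i+1)) = (D (i+1)).L := by
      conv_lhs => rw [← hAGi1.hgamL]
      exact hAGi1.hsec _ ⟨hAGi1.hL.le, le_rfl⟩
    have hc := hcov i hik
    cases hε : ε i with
    | true =>
      rw [hε, if_pos rfl] at hc
      obtain ⟨x, y, hx, hy, hxy, hGx, hGy⟩ := hc
      rw [hAGi.hull_eq] at hx hy
      refine ⟨(D i).rho x, (D i).rho y, hAGi.hrmem x (hAGi.img_subset_S hx),
        hAGi.hrmem y (hAGi.img_subset_S hy), hAGi.order_le hx hy hxy,
        Or.inl ⟨rfl, ?_, ?_⟩⟩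
      · rw [hAGi.gam_rho_img hx, show G i x = a (i+1) from hGx, hrho_a]
      · rw [hAGi.gam_rho_img hy, show G i y = b (i+1) from hGy, hrho_b]
    | false =>
      rw [hε, if_neg Bool.false_ne_true] at hc
      obtain ⟨x, y, hx, hy, hxy, hGx, hGy⟩ := hc
      rw [hAGi.hull_eq] at hx hy
      refine ⟨(D i).rho x, (D i).rho y, hAGi.hrmem x (hAGi.img_subset_S hx),
        hAGi.hrmem y (hAGi.img_subset_S hy), hAGi.order_le hx hy hxy,
        Or.inr ⟨rfl, ?_, ?_⟩⟩
      · rw [hAGi.gam_rho_img hx, show G i x = b (i+1) from hGx, hrho_b]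
      · rw [hAGi.gam_rho_img hy, show G i y = a (i+1) from hGy, hrho_a]
  -- the nested-interval construction
  have hmain : ∀ i, i ≤ k → ∃ u v : ℝ, u ∈ Icc (0:ℝ) (D 0).L ∧ v ∈ Icc (0:ℝ) (D 0).L ∧
      u ≤ v ∧
      (((∏ j ∈ Finset.range i, (if ε j then (1:ℤ) else -1)) = 1 ∧
          (D i).rho (Z i u) = 0 ∧ (D i).rho (Z i v) = (D i).L) ∨
        ((∏ j ∈ Finset.range i, (if ε j then (1:ℤ) else -1)) = -1 ∧
          (D i).rho (Z i u) = (D i).L ∧ (D i).rho (Z i v) = 0)) := by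
    intro i
    induction i with
    | zero =>
      intro _
      have hL0 := (hAG 0 (Nat.zero_le k)).hL
      refine ⟨0, (D 0).L, ⟨le_rfl, hL0.le⟩, ⟨hL0.le, le_rfl⟩, hL0.le,
        Or.inl ⟨by simp, ?_, ?_⟩⟩
      · exact (hAG 0 (Nat.zero_le k)).hsec 0 ⟨le_rfl, hL0.le⟩
      · exact (hAG 0 (Nat.zero_le k)).hsec _ ⟨hL0.le, le_rfl⟩
    | succ i ih =>
      intro hik
      have hik' : i < k := Nat.lt_of_succ_le hik
      obtain ⟨u, v, hu, hv, huv, hdisj⟩ := ih hik'.le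
      obtain ⟨s, u', hsI, hu'I, hsu, hcovd⟩ := hcovW i hik'
      have hφc : ContinuousOn (fun t => (D i).rho (Z i t)) (Icc (0:ℝ) (D 0).L) :=
        (hAG i hik'.le).hrhoc.comp_continuousOn (hZcont i hik'.le)
      have hIccsub : Icc u v ⊆ Icc (0:ℝ) (D 0).L := Icc_subset_Icc hu.1 hv.2
      have key : ∀ t ∈ Icc (0:ℝ) (D 0).L, (D (i+1)).rho (Z (i+1) t) =
          (D (i+1)).rho (G i ((D i).gam ((D i).rho (Z i t)))) := by
        intro t ht
        rw [hZsucc i t,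
          (hAG (i+1) hik).hsec _ ((hAG (i+1) hik).hrmem _ (hGmaps i (hZS i hik'.le t ht))),
          (hAG i hik'.le).gam_rho_img (hZmem i hik'.le t ht)]
      rcases hdisj with ⟨hsgn, hφu, hφv⟩ | ⟨hsgn, hφu, hφv⟩
      · obtain ⟨x, y, hxI, hyI, hxy, hφx, hφy⟩ :=
          two_ivt_inc huv (hφc.mono hIccsub) hφu hφv hsI.1 hsu hu'I.2
        refine ⟨x, y, hIccsub hxI, hIccsub hyI, hxy, ?_⟩
        rcases hcovd with ⟨hεi, hva, hvb⟩ | ⟨hεi, hva, hvb⟩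
        · exact Or.inl ⟨by rw [Finset.prod_range_succ, hsgn, hεi]; norm_num,
            by rw [key x (hIccsub hxI), hφx, hva],
            by rw [key y (hIccsub hyI), hφy, hvb]⟩
        · exact Or.inr ⟨by rw [Finset.prod_range_succ, hsgn, hεi]; norm_num,
            by rw [key x (hIccsub hxI), hφx, hva],
            by rw [key y (hIccsub hyI), hφy, hvb]⟩
      · obtain ⟨x, y, hxI, hyI, hxy, hφx, hφy⟩ :=
          two_ivt_dec huv (hφc.mono hIccsub) hφu hφv hsI.1 hsu hu'I.2
        refine ⟨x, y, hIccsub hxI, hIccsub hyI, hxy, ?_⟩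
        rcases hcovd with ⟨hεi, hva, hvb⟩ | ⟨hεi, hva, hvb⟩
        · exact Or.inr ⟨by rw [Finset.prod_range_succ, hsgn, hεi]; norm_num,
            by rw [key x (hIccsub hxI), hφx, hvb],
            by rw [key y (hIccsub hyI), hφy, hva]⟩
        · exact Or.inl ⟨by rw [Finset.prod_range_succ, hsgn, hεi]; norm_num,
            by rw [key x (hIccsub hxI), hφx, hvb],
            by rw [key y (hIccsub hyI), hφy, hva]⟩
  obtain ⟨u, v, hu, hv, huv, hdisj⟩ := hmain k le_rfl
  have hAG0 := hAG 0 (Nat.zero_le k)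
  rcases hdisj with ⟨hsgn, hθu, hθv⟩ | ⟨hsgn, hθu, hθv⟩
  swap
  · rw [hsign] at hsgn
    exact absurd hsgn (by norm_num)
  rw [hDk] at hθu hθv
  have hIccsub' : Icc u v ⊆ Icc (0:ℝ) (D 0).L := Icc_subset_Icc hu.1 hv.2
  have hθc : ContinuousOn (fun t => (D 0).rho (Z k t)) (Icc (0:ℝ) (D 0).L) :=
    hAG0.hrhoc.comp_continuousOn (hZcont k le_rfl)
  by_cases hgood : ∃ q, q ∈ Icc u v ∧ (D 0).rho (Z k q) = q ∧
      ∀ i, i < k → G i (Z i q) ∈ (D (i+1)).gam '' Icc (0:ℝ) (D (i+1)).L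
  · obtain ⟨q, hqI, hθq, hP⟩ := hgood
    have hq0 : q ∈ Icc (0:ℝ) (D 0).L := hIccsub' hqI
    have horb : ∀ i, i ≤ k → F^[∑ j ∈ Finset.range i, n j] (Z 0 q) =
        Z i q + ((∑ j ∈ Finset.range i, p j : ℤ) : ℂ) := by
      intro i
      induction i with
      | zero => simp
      | succ i ih =>
        intro hik
        have hik' : i < k := Nat.lt_of_succ_le hik
        have h1 : Z (i+1) q = G i (Z i q) := by
          rw [hZsucc i q, (hAG (i+1) hik).gam_rho_img (hP i hik')]
        have hZiS : Z i q ∈ Sspace := hZS i hik'.le q hq0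
        calc F^[∑ j ∈ Finset.range (i+1), n j] (Z 0 q)
            = F^[n i + ∑ j ∈ Finset.range i, n j] (Z 0 q) := by
              rw [Finset.sum_range_succ, Nat.add_comm]
          _ = F^[n i] (F^[∑ j ∈ Finset.range i, n j] (Z 0 q)) :=
              Function.iterate_add_apply F _ _ _
          _ = F^[n i] (Z i q + ((∑ j ∈ Finset.range i, p j : ℤ) : ℂ)) := by rw [ih hik'.le]
          _ = F^[n i] (Z i q) + ((∑ j ∈ Finset.range i, p j : ℤ) : ℂ) :=
              iter_add_int hF hZiS _ _
          _ = Z (i+1) q + ((∑ j ∈ Finset.range (i+1), p j : ℤ) : ℂ) := by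
              rw [h1]
              show F^[n i] (Z i q) + _ = F^[n i] (Z i q) - ((p i : ℤ) : ℂ) + _
              push_cast [Finset.sum_range_succ]
              ring
    have hZk0 : Z k q = Z 0 q := by
      have h2 : Z k q ∈ (D 0).gam '' Icc (0:ℝ) (D 0).L := by
        have := hZmem k le_rfl q hq0
        rwa [hDk] at this
      have h1 : (D 0).gam ((D 0).rho (Z k q)) = Z k q := hAG0.gam_rho_img h2
      rw [← h1, hθq, hZzero]
    refine ⟨Z 0 q, ?_, ?_, ?_⟩
    · rw [hAG0.hull_eq]
      exact ⟨q, hq0, rfl⟩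
    · have := horb k le_rfl
      rwa [hZk0] at this
    · intro i hi0 hik
      refine ⟨Z i q, ?_, ?_⟩
      · rw [(hAG i hik.le).hull_eq]
        exact hZmem i hik.le q hq0
      · exact horb i hik.le
  · exfalso
    apply no_plateau_fix (θ := fun t => (D 0).rho (Z k t)) hu.1 huv hv.2 hAG0.hL
      (hθc.mono hIccsub') hθu hθv
    intro q hq hθq
    have hbad : ∃ i, i < k ∧ G i (Z i q) ∉ (D (i+1)).gam '' Icc (0:ℝ) (D (i+1)).L := by
      by_contra hc
      push_neg at hc
      exact hgood ⟨q, hq, hθq, fun i hik => hc i hik⟩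
    obtain ⟨i, hik, hni⟩ := hbad
    have hq0' : q ∈ Icc (0:ℝ) (D 0).L := hIccsub' hq
    have hwS : G i (Z i q) ∈ Sspace := hGmaps i (hZS i hik.le q hq0')
    obtain ⟨ε', hε', hconst⟩ := (hAG (i+1) (Nat.succ_le_of_lt hik)).hplat _ hwS hni
    have hψc : ContinuousOn (fun t => G i (Z i t)) (Icc u v) :=
      ((hGcont i).comp (hZcont i hik.le) (fun t ht => hZS i hik.le t ht)).mono hIccsub'
    obtain ⟨δ, hδ, hδc⟩ := Metric.continuousWithinAt_iff.mp (hψc q hq) ε' hε'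
    refine ⟨δ, hδ, fun t ht htq => ?_⟩
    have hdist : dist t q < δ := by rwa [Real.dist_eq]
    have h1 : (D (i+1)).rho (G i (Z i t)) = (D (i+1)).rho (G i (Z i q)) :=
      hconst _ (hGmaps i (hZS i hik.le t (hIccsub' ht))) (hδc ht hdist)
    have h2 : Z (i+1) t = Z (i+1) q := by
      rw [hZsucc i t, hZsucc i q, h1]
    have h3 : ∀ j, i+1 ≤ j → Z j t = Z j q := by
      intro j hj
      induction j, hj using Nat.le_induction with
      | base => exact h2
      | succ j hj ihj =>
        rw [hZsucc j t, hZsucc j q, ihj]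
    show (D 0).rho (Z k t) = (D 0).rho (Z k q)
    rw [h3 k (Nat.succ_le_of_lt hik)]


end
end
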